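/- arXiv:1305.6502 — 4 statements merged into one kernel-verified Lean document; each statement's English description precedes it below -/
import Mathlib

section
/- Let Ψ be a non-linear branching mechanism with Ψ′(0+) := lim_{λ→0+} Ψ(λ)/λ ∈ (−∞,0), and set γ := sup{λ ∈ [0,∞) : Ψ(λ) ≤ 0} ∈ (0,∞] (so Ψ < 0 on (0,γ)). Fix θ, θ′ ∈ (0,γ) and let g_θ, g_{θ′} : [0,∞) → (0,∞) satisfy ∫_{g_θ(t)}^{θ} dλ/(−Ψ(λ)) = t and ∫_{g_{θ′}(t)}^{θ′} dλ/(−Ψ(λ)) = t for all t ≥ 0. Then g_θ(t) → 0 as t → ∞, and g_θ(t)/g_{θ′}(t) → exp( Ψ′(0+) ∫_{θ′}^{θ} dλ/Ψ(λ) ) as t → ∞. -/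
open MeasureTheory Set Filter Topology
open scoped ENNReal NNReal

/-- The Lévy–Khintchine shape of a branching mechanism:
`Ψ(λ) = αλ + βλ² + ∫_{(0,∞)} (e^{−λr} − 1 + λr·1_{r<1}) π(dr)`. -/
noncomputable def psiShape (a b : ℝ) (piM : Measure ℝ) (l : ℝ) : ℝ :=
  a * l + b * l ^ 2 +
    ∫ r, (Real.exp (-l * r) - 1 + (if r < 1 then l * r else 0)) ∂piM

/-- `Ψ` is a branching mechanism with parameters `a = α`, `b = β` and Lévy measure `piM = π`:
`β ≥ 0`, `π` is carried by `(0,∞)`, `∫ (1 ∧ r²) π(dr) < ∞`, and `Ψ` has the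
Lévy–Khintchine form on `[0,∞)`. -/
def IsBranchingMechanism (Ψ : ℝ → ℝ) (a b : ℝ) (piM : Measure ℝ) : Prop :=
  0 ≤ b ∧ piM (Set.Ioi (0:ℝ))ᶜ = 0 ∧
    (∫⁻ r, ENNReal.ofReal (min 1 (r ^ 2)) ∂piM) < ⊤ ∧
    ∀ l, 0 ≤ l → Ψ l = psiShape a b piM l

/-- Non-linearity of the branching mechanism: `β > 0` or `π ≠ 0`. -/
def IsNonLinear (b : ℝ) (piM : Measure ℝ) : Prop := 0 < b ∨ piM ≠ 0

/-- Finite variation type: `β = 0` and `∫_{(0,1)} r π(dr) < ∞`. -/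
def FiniteVariationType (b : ℝ) (piM : Measure ℝ) : Prop :=
  b = 0 ∧ (∫⁻ r in Set.Ioo (0:ℝ) 1, ENNReal.ofReal r ∂piM) < ⊤

/-- The drift constant `D = α + ∫_{(0,1)} r π(dr)` (finite variation cases). -/
noncomputable def Dconst (a : ℝ) (piM : Measure ℝ) : ℝ :=
  a + ∫ r in Set.Ioo (0:ℝ) 1, r ∂piM

/-- `u` is a flow for `Ψ`: for every `λ > 0`, `u(0,λ) = λ`, `u(t,λ) > 0` and
`∂_t u(t,λ) = −Ψ(u(t,λ))` on `[0,∞)`. -/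
def IsFlow (Ψ : ℝ → ℝ) (u : ℝ → ℝ → ℝ) : Prop :=
  (∀ l, 0 < l → u 0 l = l) ∧
  (∀ l, 0 < l → ∀ t, 0 ≤ t → 0 < u t l) ∧
  (∀ l, 0 < l → ∀ t, 0 ≤ t →
    HasDerivWithinAt (fun s => u s l) (-(Ψ (u t l))) (Set.Ici 0) t)

namespace CsbpGreyAux

lemma exp_neg_lb {x : ℝ} : 1 - x ≤ Real.exp (-x) := by
  linarith [Real.add_one_le_exp (-x)]

lemma exp_neg_mul_lb {x : ℝ} (hx : 0 ≤ x) :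
    x * Real.exp (-x) ≤ 1 - Real.exp (-x) := by
  have h1 : x + 1 ≤ Real.exp x := Real.add_one_le_exp x
  have h2 : (0:ℝ) < Real.exp (-x) := Real.exp_pos _
  have h3 : Real.exp x * Real.exp (-x) = 1 := by
    rw [← Real.exp_add]; simp
  nlinarith

lemma exp_ge_quarter_sq {x : ℝ} (hx : 0 ≤ x) : x ^ 2 / 4 ≤ Real.exp x := by
  have h1 : x / 2 + 1 ≤ Real.exp (x / 2) := Real.add_one_le_exp _
  have h2 : Real.exp (x / 2) ^ 2 = Real.exp x := by
    rw [sq, ← Real.exp_add]; ring_nf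
  nlinarith [sq_nonneg (Real.exp (x / 2) - x / 2)]

/-- For `d ≥ 0`: `d e^{-(y+d)} ≤ e^{-y} - e^{-(y+d)} ≤ d e^{-y}`. -/
lemma exp_sub_exp_bounds {y d : ℝ} (hd : 0 ≤ d) :
    d * Real.exp (-(y + d)) ≤ Real.exp (-y) - Real.exp (-(y + d)) ∧
      Real.exp (-y) - Real.exp (-(y + d)) ≤ d * Real.exp (-y) := by
  have hsplit : Real.exp (-(y + d)) = Real.exp (-y) * Real.exp (-d) := by
    rw [← Real.exp_add]; ring_nf
  have h1 : 1 - d ≤ Real.exp (-d) := exp_neg_lb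
  have h2 : d * Real.exp (-d) ≤ 1 - Real.exp (-d) := exp_neg_mul_lb hd
  have h3 : (0:ℝ) < Real.exp (-y) := Real.exp_pos _
  constructor <;> nlinarith

/-- the integrand of the Lévy–Khintchine integral -/
noncomputable def lkf (l r : ℝ) : ℝ :=
  Real.exp (-l * r) - 1 + (if r < 1 then l * r else 0)

lemma lkf_measurable (l : ℝ) : Measurable (lkf l) := by
  unfold lkf
  apply Measurable.add
  · exact (Real.measurable_exp.comp (measurable_const.mul measurable_id)).sub measurable_const
  · exact Measurable.ite (measurableSet_lt measurable_id measurable_const)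
      (measurable_const.mul measurable_id) measurable_const

lemma lkf_abs_le {l r : ℝ} (hl : 0 ≤ l) (hr : 0 < r) :
    |lkf l r| ≤ max (l ^ 2) 1 * min 1 (r ^ 2) := by
  have hlr : 0 ≤ l * r := mul_nonneg hl hr.le
  have hle1 : Real.exp (-(l * r)) ≤ 1 := Real.exp_le_one_iff.mpr (by linarith)
  have hlb : 1 - l * r ≤ Real.exp (-(l * r)) := exp_neg_lb
  have hmul : l * r * Real.exp (-(l * r)) ≤ 1 - Real.exp (-(l * r)) := exp_neg_mul_lb hlr
  unfold lkf
  rw [neg_mul]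
  by_cases hr1 : r < 1
  · rw [if_pos hr1]
    have hnn : 0 ≤ Real.exp (-(l * r)) - 1 + l * r := by linarith
    have hub : Real.exp (-(l * r)) - 1 + l * r ≤ (l * r) ^ 2 := by nlinarith
    rw [abs_of_nonneg hnn]
    have hmin : min 1 (r ^ 2) = r ^ 2 := min_eq_right (by nlinarith)
    have hmax : l ^ 2 ≤ max (l ^ 2) 1 := le_max_left _ _
    rw [hmin]
    nlinarith [sq_nonneg r, sq_nonneg l]
  · rw [if_neg hr1, add_zero]
    push_neg at hr1
    have hnp : Real.exp (-(l * r)) - 1 ≤ 0 := by linarith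
    rw [abs_of_nonpos hnp]
    have hmin : min 1 (r ^ 2) = 1 := min_eq_left (by nlinarith)
    have hmax : (1:ℝ) ≤ max (l ^ 2) 1 := le_max_right _ _
    have : -(Real.exp (-(l * r)) - 1) ≤ 1 := by
      have := Real.exp_pos (-(l * r)); linarith
    rw [hmin]
    nlinarith

/-- Lipschitz-type pointwise bound on the LK integrand. -/
lemma lkf_lip {z1 z2 r : ℝ} (h1 : 0 < z1) (h12 : z1 ≤ z2) (hr : 0 < r) :
    |lkf z2 r - lkf z1 r| ≤ (z2 - z1) * (max (4 / z1 ^ 2) z2 * min 1 (r ^ 2)) := by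
  have hd0 : 0 ≤ (z2 - z1) * r := mul_nonneg (by linarith) hr.le
  obtain ⟨hlow, hup⟩ := exp_sub_exp_bounds (y := z1 * r) (d := (z2 - z1) * r) hd0
  have hsplit : z1 * r + (z2 - z1) * r = z2 * r := by ring
  rw [hsplit] at hlow hup
  have he1 : Real.exp (-(z1 * r)) ≤ 1 := Real.exp_le_one_iff.mpr (by nlinarith)
  have he1' : (0:ℝ) < Real.exp (-(z1 * r)) := Real.exp_pos _
  have he2' : (0:ℝ) < Real.exp (-(z2 * r)) := Real.exp_pos _
  by_cases hr1 : r < 1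
  · have hmin : min 1 (r ^ 2) = r ^ 2 := min_eq_right (by nlinarith)
    have e2 : lkf z2 r - lkf z1 r
        = (z2 - z1) * r - (Real.exp (-(z1 * r)) - Real.exp (-(z2 * r))) := by
      unfold lkf; rw [if_pos hr1, if_pos hr1, neg_mul, neg_mul]; ring
    have hnn : 0 ≤ lkf z2 r - lkf z1 r := by rw [e2]; nlinarith
    have hlb2 : 1 - z2 * r ≤ Real.exp (-(z2 * r)) := exp_neg_lb
    have hub2 : lkf z2 r - lkf z1 r ≤ (z2 - z1) * (z2 * r ^ 2) := by
      rw [e2]; nlinarith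
    rw [abs_of_nonneg hnn, hmin]
    have hz2max : z2 ≤ max (4 / z1 ^ 2) z2 := le_max_right _ _
    nlinarith [sq_nonneg r]
  · push_neg at hr1
    have hmin : min 1 (r ^ 2) = 1 := min_eq_left (by nlinarith)
    have e2 : lkf z2 r - lkf z1 r = -(Real.exp (-(z1 * r)) - Real.exp (-(z2 * r))) := by
      unfold lkf; rw [if_neg (not_lt.mpr hr1), if_neg (not_lt.mpr hr1), neg_mul, neg_mul]; ring
    have hnp : lkf z2 r - lkf z1 r ≤ 0 := by rw [e2]; nlinarith
    rw [abs_of_nonpos hnp, e2, neg_neg, hmin, mul_one]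
    -- |diff| = exp(-(z1 r)) - exp(-(z2 r)) ≤ (z2-z1) r exp(-(z1 r)) ≤ (z2-z1) * 4/z1²
    have hq : Real.exp (-(z1 * r)) * (z1 * r) ^ 2 ≤ 4 := by
      have h4 : (z1 * r) ^ 2 / 4 ≤ Real.exp (z1 * r) :=
        exp_ge_quarter_sq (mul_nonneg h1.le hr.le)
      have hinv : Real.exp (-(z1 * r)) * Real.exp (z1 * r) = 1 := by
        rw [← Real.exp_add]; simp
      nlinarith
    have hre : r * Real.exp (-(z1 * r)) ≤ 4 / z1 ^ 2 := by
      rw [le_div_iff₀ (by positivity : (0:ℝ) < z1 ^ 2)]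
      nlinarith
    have hmax : 4 / z1 ^ 2 ≤ max (4 / z1 ^ 2) z2 := le_max_left _ _
    nlinarith



/-- `ψ(u) = (e^{-u} - 1)/u` is strictly increasing on `(0,∞)`. -/
lemma psi_strictMono : StrictMonoOn (fun u : ℝ => (Real.exp (-u) - 1) / u) (Set.Ioi 0) := by
  apply strictMonoOn_of_deriv_pos (convex_Ioi 0)
  · apply ContinuousOn.div
    · exact (Real.continuous_exp.comp continuous_neg).continuousOn.sub continuousOn_const
    · exact continuousOn_id
    · intro x hx; exact ne_of_gt hx
  · intro x hx
    rw [interior_Ioi] at hx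
    have hx0 : (0:ℝ) < x := hx
    have hd : HasDerivAt (fun u : ℝ => (Real.exp (-u) - 1) / u)
        ((-Real.exp (-x) * x - (Real.exp (-x) - 1) * 1) / x ^ 2) x := by
      have h1 : HasDerivAt (fun u : ℝ => Real.exp (-u) - 1) (-Real.exp (-x)) x := by
        simpa using ((Real.hasDerivAt_exp (-x)).comp x (hasDerivAt_neg x)).sub_const 1
      exact h1.div (hasDerivAt_id x) (ne_of_gt hx0)
    rw [hd.deriv]
    have key : Real.exp (-x) * (1 + x) < 1 := by
      have h1 : x + 1 < Real.exp x := Real.add_one_lt_exp (ne_of_gt hx0)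
      have h2 : (0:ℝ) < Real.exp (-x) := Real.exp_pos _
      have h3 : Real.exp x * Real.exp (-x) = 1 := by rw [← Real.exp_add]; simp
      nlinarith
    have : (0:ℝ) < -Real.exp (-x) * x - (Real.exp (-x) - 1) * 1 := by nlinarith
    positivity


variable {piM : Measure ℝ}

lemma integrable_min_one_sq (hfin : (∫⁻ r, ENNReal.ofReal (min 1 (r ^ 2)) ∂piM) < ⊤) :
    Integrable (fun r => min 1 (r ^ 2)) piM := by
  refine ⟨(measurable_const.min (measurable_id.pow_const 2)).aestronglyMeasurable, ?_⟩
  rw [hasFiniteIntegral_iff_ofReal (Eventually.of_forall fun r =>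
    le_min zero_le_one (sq_nonneg r))]
  exact hfin

lemma ae_mem_Ioi (hcar : piM (Set.Ioi (0:ℝ))ᶜ = 0) : ∀ᵐ r ∂piM, r ∈ Set.Ioi (0:ℝ) :=
  MeasureTheory.mem_ae_iff.2 hcar

lemma integrable_lkf (hcar : piM (Set.Ioi (0:ℝ))ᶜ = 0)
    (hfin : (∫⁻ r, ENNReal.ofReal (min 1 (r ^ 2)) ∂piM) < ⊤) {l : ℝ} (hl : 0 ≤ l) :
    Integrable (lkf l) piM := by
  refine Integrable.mono' ((integrable_min_one_sq hfin).const_mul (max (l ^ 2) 1))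
    (lkf_measurable l).aestronglyMeasurable ?_
  filter_upwards [ae_mem_Ioi hcar] with r hr
  rw [Real.norm_eq_abs]
  exact lkf_abs_le hl hr

/-- strict monotonicity of `l ↦ lkf l r / l` for `r > 0`. -/
lemma lkf_div_strict {l1 l2 r : ℝ} (h1 : 0 < l1) (h12 : l1 < l2) (hr : 0 < r) :
    lkf l1 r / l1 < lkf l2 r / l2 := by
  have key : ∀ l : ℝ, 0 < l → lkf l r / l
      = r * ((Real.exp (-(l * r)) - 1) / (l * r)) + (if r < 1 then r else 0) := by
    intro l hl
    unfold lkf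
    rw [neg_mul, add_div]
    congr 1
    · field_simp
    · split_ifs with h
      · rw [mul_comm, mul_div_assoc, div_self hl.ne', mul_one]
      · exact zero_div l
  rw [key l1 h1, key l2 (h1.trans h12)]
  have := psi_strictMono (Set.mem_Ioi.mpr (mul_pos h1 hr))
    (Set.mem_Ioi.mpr (mul_pos (h1.trans h12) hr))
    (by exact mul_lt_mul_of_pos_right h12 hr)
  simp only at this
  have h2 : r * ((Real.exp (-(l1 * r)) - 1) / (l1 * r))
      < r * ((Real.exp (-(l2 * r)) - 1) / (l2 * r)) := by
    exact mul_lt_mul_of_pos_left this hr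
  linarith

lemma measure_Ioi_pos (hcar : piM (Set.Ioi (0:ℝ))ᶜ = 0) (hpi : piM ≠ 0) :
    0 < piM (Set.Ioi 0) := by
  rcases eq_or_ne (piM (Set.Ioi 0)) 0 with h0 | h0
  · exfalso
    apply hpi
    apply MeasureTheory.Measure.measure_univ_eq_zero.mp
    have hle : piM Set.univ ≤ piM (Set.Ioi 0) + piM (Set.Ioi (0:ℝ))ᶜ := by
      rw [← Set.union_compl_self (Set.Ioi (0:ℝ))]
      exact measure_union_le _ _
    rw [h0, hcar] at hle
    simpa using hle
  · exact h0.bot_lt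

lemma h_strictMono {Ψ : ℝ → ℝ} {a b : ℝ}
    (hbm : IsBranchingMechanism Ψ a b piM) (hnl : IsNonLinear b piM) :
    StrictMonoOn (fun l => Ψ l / l) (Set.Ioi 0) := by
  obtain ⟨hb, hcar, hfin, hshape⟩ := hbm
  have hform : ∀ l : ℝ, 0 < l → Ψ l / l = a + b * l + ∫ r, lkf l r / l ∂piM := by
    intro l hl
    rw [hshape l hl.le]
    unfold psiShape
    rw [MeasureTheory.integral_div]
    show (a * l + b * l ^ 2 + ∫ r, lkf l r ∂piM) / l = _
    field_simp
  intro l1 h1 l2 h2 h12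
  simp only [Set.mem_Ioi] at h1 h2
  have int1 : Integrable (fun r => lkf l1 r / l1) piM :=
    (integrable_lkf hcar hfin h1.le).div_const _
  have int2 : Integrable (fun r => lkf l2 r / l2) piM :=
    (integrable_lkf hcar hfin h2.le).div_const _
  have hae : ∀ᵐ r ∂piM, 0 ≤ lkf l2 r / l2 - lkf l1 r / l1 := by
    filter_upwards [ae_mem_Ioi hcar] with r hr
    exact sub_nonneg.mpr (lkf_div_strict h1 h12 hr).le
  have hsub : (∫ r, (lkf l2 r / l2 - lkf l1 r / l1) ∂piM)
      = (∫ r, lkf l2 r / l2 ∂piM) - ∫ r, lkf l1 r / l1 ∂piM :=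
    MeasureTheory.integral_sub int2 int1
  simp only
  rw [hform l1 h1, hform l2 h2]
  rcases hnl with hbpos | hpi
  · have hIle : (∫ r, lkf l1 r / l1 ∂piM) ≤ ∫ r, lkf l2 r / l2 ∂piM := by
      have h0 : 0 ≤ ∫ r, (lkf l2 r / l2 - lkf l1 r / l1) ∂piM :=
        MeasureTheory.integral_nonneg_of_ae hae
      linarith [hsub ▸ h0]
    have : b * l1 < b * l2 := by nlinarith
    linarith
  · have hIlt : (∫ r, lkf l1 r / l1 ∂piM) < ∫ r, lkf l2 r / l2 ∂piM := by
      have h0 : 0 < ∫ r, (lkf l2 r / l2 - lkf l1 r / l1) ∂piM := by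
        rw [MeasureTheory.integral_pos_iff_support_of_nonneg_ae hae (int2.sub int1)]
        refine lt_of_lt_of_le (measure_Ioi_pos hcar hpi) (measure_mono ?_)
        intro r hr
        exact ne_of_gt (sub_pos.mpr (lkf_div_strict h1 h12 hr))
      linarith [hsub ▸ h0]
    have : b * l1 ≤ b * l2 := by nlinarith
    linarith


/-- Local Lipschitz bound for a branching mechanism on `[u,v] ⊂ (0,∞)`. -/
lemma psi_lip {Ψ : ℝ → ℝ} {a b : ℝ}
    (hbm : IsBranchingMechanism Ψ a b piM) (u v : ℝ) (hu : 0 < u) :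
    ∃ L : ℝ, 0 < L ∧ ∀ z1 z2, u ≤ z1 → z1 ≤ z2 → z2 ≤ v →
      |Ψ z2 - Ψ z1| ≤ L * (z2 - z1) := by
  obtain ⟨hb, hcar, hfin, hshape⟩ := hbm
  set I := ∫ r, min 1 (r ^ 2) ∂piM with hI
  have hI0 : 0 ≤ I := MeasureTheory.integral_nonneg fun r => le_min zero_le_one (sq_nonneg r)
  set C := max (4 / u ^ 2) v with hC
  have hC0 : 0 < C := lt_of_lt_of_le (by positivity) (le_max_left _ _)
  refine ⟨|a| + 2 * |b| * |v| + C * I + 1, by positivity, ?_⟩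
  intro z1 z2 hz1 hz12 hz2
  have h01 : 0 < z1 := lt_of_lt_of_le hu hz1
  have hvz : z2 ≤ |v| := le_trans hz2 (le_abs_self v)
  have hform : ∀ z : ℝ, 0 ≤ z → Ψ z = a * z + b * z ^ 2 + ∫ r, lkf z r ∂piM := by
    intro z hz; rw [hshape z hz]; rfl
  rw [hform z1 (by linarith), hform z2 (by linarith)]
  have int1 : Integrable (lkf z1) piM := integrable_lkf hcar hfin h01.le
  have int2 : Integrable (lkf z2) piM := integrable_lkf hcar hfin (by linarith)
  have hDint : Integrable (fun r => lkf z2 r - lkf z1 r) piM := int2.sub int1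
  have habs : |∫ r, (lkf z2 r - lkf z1 r) ∂piM| ≤ (z2 - z1) * (C * I) := by
    rw [← Real.norm_eq_abs]
    refine le_trans (MeasureTheory.norm_integral_le_integral_norm _) ?_
    simp only [Real.norm_eq_abs]
    have hmono : (∫ r, |lkf z2 r - lkf z1 r| ∂piM)
        ≤ ∫ r, (z2 - z1) * (C * min 1 (r ^ 2)) ∂piM := by
      refine MeasureTheory.integral_mono_ae hDint.abs ?_ ?_
      · exact ((integrable_min_one_sq hfin).const_mul C).const_mul (z2 - z1)
      · filter_upwards [ae_mem_Ioi hcar] with r hr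
        refine le_trans (lkf_lip h01 hz12 hr) ?_
        have hmin0 : 0 ≤ min 1 (r ^ 2) := le_min zero_le_one (sq_nonneg r)
        have hmle : max (4 / z1 ^ 2) z2 ≤ C := by
          apply max_le
          · refine le_trans ?_ (le_max_left _ _)
            apply div_le_div_of_nonneg_left (by norm_num) (by positivity)
            nlinarith
          · exact le_trans hz2 (le_max_right _ _)
        have := mul_le_mul_of_nonneg_right hmle hmin0
        nlinarith
    refine le_trans hmono ?_
    rw [MeasureTheory.integral_const_mul, MeasureTheory.integral_const_mul]
  have hre : a * z2 + b * z2 ^ 2 + (∫ r, lkf z2 r ∂piM)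
      - (a * z1 + b * z1 ^ 2 + ∫ r, lkf z1 r ∂piM)
      = a * (z2 - z1) + b * (z2 + z1) * (z2 - z1)
        + ∫ r, (lkf z2 r - lkf z1 r) ∂piM := by
    rw [MeasureTheory.integral_sub int2 int1]; ring
  rw [hre]
  refine le_trans (abs_add_le _ _) ?_
  refine le_trans (add_le_add_left (abs_add_le _ _) _) ?_
  have e1 : |a * (z2 - z1)| ≤ |a| * (z2 - z1) := by
    rw [abs_mul, abs_of_nonneg (by linarith : (0:ℝ) ≤ z2 - z1)]
  have e2 : |b * (z2 + z1) * (z2 - z1)| ≤ 2 * |b| * |v| * (z2 - z1) := by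
    rw [abs_mul, abs_mul, abs_of_nonneg (by linarith : (0:ℝ) ≤ z2 - z1)]
    have h1 : |z2 + z1| ≤ 2 * |v| := by
      rw [abs_of_nonneg (by linarith : (0:ℝ) ≤ z2 + z1)]
      nlinarith
    have h2 : |b| * |z2 + z1| ≤ |b| * (2 * |v|) := mul_le_mul_of_nonneg_left h1 (abs_nonneg b)
    have h3 := mul_le_mul_of_nonneg_right h2 (by linarith : (0:ℝ) ≤ z2 - z1)
    nlinarith [h3]
  nlinarith

/-- non-integrability with a `1/(x-c)` blow-up from the right -/
lemma not_integrableOn_right {f : ℝ → ℝ} {c v K : ℝ} (hcv : c < v) (hK : 0 < K)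
    (hb : ∀ x ∈ Set.Ioo c v, (K * (x - c))⁻¹ ≤ |f x|) :
    ¬ MeasureTheory.IntegrableOn f (Set.Ioo c v) MeasureTheory.volume := by
  intro h
  have h1 : MeasureTheory.IntegrableOn (fun x => (K * (x - c))⁻¹)
      (Set.Ioo c v) MeasureTheory.volume := by
    refine MeasureTheory.Integrable.mono h
      (((measurable_const.mul (measurable_id.sub measurable_const)).inv).aestronglyMeasurable) ?_
    rw [MeasureTheory.ae_restrict_iff' measurableSet_Ioo]
    filter_upwards with x hx
    rw [Real.norm_eq_abs, Real.norm_eq_abs]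
    have hnn : (0:ℝ) ≤ (K * (x - c))⁻¹ := by
      have : 0 < K * (x - c) := mul_pos hK (by linarith [hx.1])
      positivity
    rw [abs_of_nonneg hnn]
    exact hb x hx
  have h2 : MeasureTheory.IntegrableOn (fun x => (x - c)⁻¹)
      (Set.Ioo c v) MeasureTheory.volume := by
    have h3 := h1.const_mul K
    have he : (fun x => K * (K * (x - c))⁻¹) = fun x : ℝ => (x - c)⁻¹ := by
      funext x
      rw [mul_inv, ← mul_assoc, mul_inv_cancel₀ hK.ne', one_mul]
    rwa [he] at h3
  have h3 : IntervalIntegrable (fun x => (x - c)⁻¹) MeasureTheory.volume c v := by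
    rw [intervalIntegrable_iff, Set.uIoc_of_le hcv.le]
    exact h2.congr_set_ae MeasureTheory.Ioo_ae_eq_Ioc.symm
  rcases intervalIntegrable_sub_inv_iff.mp h3 with h4 | h4
  · exact hcv.ne h4
  · exact h4 Set.left_mem_uIcc

/-- non-integrability with a `1/(c-x)` blow-up from the left -/
lemma not_integrableOn_left {f : ℝ → ℝ} {u c K : ℝ} (huc : u < c) (hK : 0 < K)
    (hb : ∀ x ∈ Set.Ioo u c, (K * (c - x))⁻¹ ≤ |f x|) :
    ¬ MeasureTheory.IntegrableOn f (Set.Ioo u c) MeasureTheory.volume := by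
  intro h
  have h1 : MeasureTheory.IntegrableOn (fun x => (K * (c - x))⁻¹)
      (Set.Ioo u c) MeasureTheory.volume := by
    refine MeasureTheory.Integrable.mono h
      (((measurable_const.mul (measurable_const.sub measurable_id)).inv).aestronglyMeasurable) ?_
    rw [MeasureTheory.ae_restrict_iff' measurableSet_Ioo]
    filter_upwards with x hx
    rw [Real.norm_eq_abs, Real.norm_eq_abs]
    have hnn : (0:ℝ) ≤ (K * (c - x))⁻¹ := by
      have : 0 < K * (c - x) := mul_pos hK (by linarith [hx.2])
      positivity
    rw [abs_of_nonneg hnn]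
    exact hb x hx
  have h2 : MeasureTheory.IntegrableOn (fun x => (x - c)⁻¹)
      (Set.Ioo u c) MeasureTheory.volume := by
    have h3 := (h1.const_mul K).neg
    refine h3.congr (Filter.Eventually.of_forall fun x => ?_)
    show -(K * (K * (c - x))⁻¹) = (x - c)⁻¹
    rw [mul_inv, ← mul_assoc, mul_inv_cancel₀ hK.ne', one_mul, ← inv_neg, neg_sub]
  have h3 : IntervalIntegrable (fun x => (x - c)⁻¹) MeasureTheory.volume u c := by
    rw [intervalIntegrable_iff, Set.uIoc_of_le huc.le]
    exact h2.congr_set_ae MeasureTheory.Ioo_ae_eq_Ioc.symm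
  rcases intervalIntegrable_sub_inv_iff.mp h3 with h4 | h4
  · exact huc.ne h4
  · exact h4 Set.right_mem_uIcc


end CsbpGreyAux

/-- let `Ψ` be a non-linear branching mechanism with
`Ψ′(0+) = c ∈ (−∞,0)`, let `γ = sup{λ : Ψ(λ) ≤ 0}` and fix `θ, θ′ ∈ (0,γ)`
(expressed by `θ < γ`, i.e. `∃ l > θ, Ψ(l) ≤ 0`). If `g_θ, g_{θ′} : [0,∞) → (0,∞)`
satisfy `∫_{g_θ(t)}^{θ} dλ/(−Ψ(λ)) = t` (and similarly for `θ′`), then `g_θ(t) → 0`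
and `g_θ(t)/g_{θ′}(t) → exp(c ∫_{θ′}^{θ} dλ/Ψ(λ))` as `t → ∞`. -/
theorem csbp_grey_backward_flow_ratio_supercritical
    (Ψ : ℝ → ℝ) (a b : ℝ) (piM : Measure ℝ)
    (hbm : IsBranchingMechanism Ψ a b piM) (hnl : IsNonLinear b piM)
    (c : ℝ) (hc : c < 0) (hder : Tendsto (fun l => Ψ l / l) (𝓝[>] 0) (𝓝 c))
    (θ θ' : ℝ) (hθ : 0 < θ) (hθ' : 0 < θ')
    (hθγ : ∃ l : ℝ, θ < l ∧ Ψ l ≤ 0) (hθ'γ : ∃ l : ℝ, θ' < l ∧ Ψ l ≤ 0)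
    (g g' : ℝ → ℝ)
    (hg : ∀ t : ℝ, 0 ≤ t → 0 < g t) (hg' : ∀ t : ℝ, 0 ≤ t → 0 < g' t)
    (hgeq : ∀ t : ℝ, 0 ≤ t → (∫ l in (g t)..θ, (-(Ψ l))⁻¹) = t)
    (hg'eq : ∀ t : ℝ, 0 ≤ t → (∫ l in (g' t)..θ', (-(Ψ l))⁻¹) = t) :
    Tendsto g atTop (𝓝 0) ∧
      Tendsto (fun t => g t / g' t) atTop
        (𝓝 (Real.exp (c * ∫ l in θ'..θ, (Ψ l)⁻¹))) := by
  classical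
  set h : ℝ → ℝ := fun l => Ψ l / l with hhdef
  have hmono : StrictMonoOn h (Set.Ioi 0) := CsbpGreyAux.h_strictMono hbm hnl
  have hΨl : ∀ l : ℝ, l ≠ 0 → Ψ l = l * h l := by
    intro l hl
    rw [hhdef]
    field_simp
  have hge : ∀ l : ℝ, 0 < l → c ≤ h l := by
    intro l hl
    refine le_of_tendsto hder ?_
    filter_upwards [Ioo_mem_nhdsGT hl] with x hx
    exact (hmono (Set.mem_Ioi.mpr hx.1) (Set.mem_Ioi.mpr hl) hx.2).le
  have hkey : ∀ l s : ℝ, 0 < l → l < s → Ψ s ≤ 0 → h l < 0 := by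
    intro l s hl hls hs
    have hs0 : 0 < s := hl.trans hls
    have hhs : h s ≤ 0 := div_nonpos_of_nonpos_of_nonneg hs hs0.le
    exact lt_of_lt_of_le (hmono (Set.mem_Ioi.mpr hl) (Set.mem_Ioi.mpr hs0) hls) hhs
  obtain ⟨w1, hw1, hw1Ψ⟩ := hθγ
  obtain ⟨w2, hw2, hw2Ψ⟩ := hθ'γ
  have hhθ : h θ < 0 := hkey θ w1 hθ hw1 hw1Ψ
  have hhθ' : h θ' < 0 := hkey θ' w2 hθ' hw2 hw2Ψ
  -- globally monotone measurable extension of h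
  set H : ℝ → ℝ := fun l => if 0 < l then h l else c with hHdef
  have hHeq : ∀ l : ℝ, 0 < l → H l = h l := fun l hl => if_pos hl
  have hHmono : Monotone H := by
    intro x y hxy
    by_cases hx : 0 < x
    · have hy : 0 < y := lt_of_lt_of_le hx hxy
      rw [hHeq x hx, hHeq y hy]
      rcases eq_or_lt_of_le hxy with he | hlt
      · rw [he]
      · exact (hmono (Set.mem_Ioi.mpr hx) (Set.mem_Ioi.mpr hy) hlt).le
    · by_cases hy : 0 < y
      · rw [hHeq y hy, hHdef]; simp only [if_neg hx]
        exact hge y hy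
      · rw [hHdef]; simp only [if_neg hx, if_neg hy]; exact le_refl c
  have hHmeas : Measurable H := hHmono.measurable
  set F : ℝ → ℝ := fun l => (-(Ψ l))⁻¹ with hFdef
  have hFeq : ∀ l : ℝ, 0 < l → F l = (-(l * H l))⁻¹ := by
    intro l hl
    rw [hFdef]
    simp only
    rw [hHeq l hl, ← hΨl l hl.ne']
  -- positivity of F in the subcritical region
  have hFpos : ∀ l q : ℝ, 0 < l → l ≤ q → h q < 0 → 0 < -(Ψ l) := by
    intro l q hl hlq hq
    have hhl : h l ≤ h q := by
      rcases eq_or_lt_of_le hlq with he | hlt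
      · rw [he]
      · exact (hmono (Set.mem_Ioi.mpr hl) (Set.mem_Ioi.mpr (hl.trans hlt)) hlt).le
    have : Ψ l < 0 := by
      rw [hΨl l hl.ne']
      exact mul_neg_of_pos_of_neg hl (lt_of_le_of_lt hhl hq)
    linarith
  -- interval integrability of F on [p,q] ⊆ (0, subcritical]
  have hintF : ∀ p q : ℝ, 0 < p → p ≤ q → h q < 0 →
      IntervalIntegrable F MeasureTheory.volume p q := by
    intro p q hp hpq hq
    rw [intervalIntegrable_iff, Set.uIoc_of_le hpq]
    have hMeas : Measurable (fun l : ℝ => (-(l * H l))⁻¹) :=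
      ((measurable_id.mul hHmeas).neg).inv
    have hbound : MeasureTheory.IntegrableOn (fun l : ℝ => (-(l * H l))⁻¹)
        (Set.Ioc p q) MeasureTheory.volume := by
      apply MeasureTheory.Measure.integrableOn_of_bounded (M := (p * (-h q))⁻¹)
      · exact (measure_Ioc_lt_top).ne
      · exact hMeas.aestronglyMeasurable
      · rw [MeasureTheory.ae_restrict_iff' measurableSet_Ioc]
        filter_upwards with l hl
        have hl0 : 0 < l := hp.trans hl.1
        have hhl : h l ≤ h q := by
          rcases eq_or_lt_of_le hl.2 with he | hlt
          · rw [he]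
          · exact (hmono (Set.mem_Ioi.mpr hl0) (Set.mem_Ioi.mpr (hl0.trans hlt)) hlt).le
        have hpos : 0 < p * (-h q) := mul_pos hp (neg_pos.mpr hq)
        have hle : p * (-h q) ≤ -(l * H l) := by
          rw [hHeq l hl0]
          have h1 : p * (-h q) ≤ l * (-h q) :=
            mul_le_mul_of_nonneg_right hl.1.le (by linarith)
          have h2 : l * (-h q) ≤ l * (-h l) :=
            mul_le_mul_of_nonneg_left (by linarith) hl0.le
          nlinarith
        rw [Real.norm_eq_abs, abs_of_nonneg (inv_nonneg.mpr (by linarith))]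
        exact inv_anti₀ hpos hle
    refine hbound.congr_fun ?_ measurableSet_Ioc
    intro l hl
    exact (hFeq l (hp.trans hl.1)).symm
  -- Step 1 : for positive times the solution is below the starting level
  have step1 : ∀ (G : ℝ → ℝ) (th w : ℝ), 0 < th → th < w → Ψ w ≤ 0 →
      (∀ t, 0 ≤ t → 0 < G t) →
      (∀ t, 0 ≤ t → (∫ l in (G t)..th, F l) = t) →
      ∀ t, 0 < t → G t < th := by
    intro G th w hth hthw hwΨ hGpos hGeq t ht
    by_contra hcon
    push_neg at hcon
    have heq := hGeq t ht.le
    have hhth : h th < 0 := hkey th w hth hthw hwΨ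
    have hii : IntervalIntegrable F MeasureTheory.volume (G t) th := by
      by_contra hni
      rw [intervalIntegral.integral_undef hni] at heq
      exact ht.ne heq
    have hw0 : 0 < w := hth.trans hthw
    have hhw : h w ≤ 0 := div_nonpos_of_nonpos_of_nonneg hwΨ hw0.le
    have hiiOn : MeasureTheory.IntegrableOn F (Set.Ioc th (G t)) MeasureTheory.volume := by
      have h1 := hii.symm
      rw [intervalIntegrable_iff, Set.uIoc_of_le hcon] at h1
      exact h1
    by_cases hcross : ∃ z, z ∈ Set.Ioc th (G t) ∧ 0 < h z
    · obtain ⟨z, hzmem, hzpos⟩ := hcross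
      obtain ⟨hz1, hz2⟩ := hzmem
      have hz0 : 0 < z := hth.trans hz1
      set S : Set ℝ := {l : ℝ | 0 < l ∧ h l ≤ 0} with hSdef
      have hwS : w ∈ S := ⟨hw0, hhw⟩
      have hSub : ∀ s ∈ S, s ≤ z := by
        intro s hs
        by_contra hzs
        push_neg at hzs
        have := hmono (Set.mem_Ioi.mpr hz0) (Set.mem_Ioi.mpr hs.1) hzs
        have := hs.2
        linarith
      have hSne : S.Nonempty := ⟨w, hwS⟩
      have hSbdd : BddAbove S := ⟨z, hSub⟩
      set ζ := sSup S with hζdef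
      have hζw : w ≤ ζ := le_csSup hSbdd hwS
      have hζz : ζ ≤ z := csSup_le hSne hSub
      have hθζ : th < ζ := hthw.trans_le hζw
      have hζ0 : 0 < ζ := hth.trans hθζ
      have hζG : ζ ≤ G t := hζz.trans hz2
      have hnegζ : ∀ l, 0 < l → l < ζ → h l < 0 := by
        intro l hl hlζ
        obtain ⟨s, hsS, hls⟩ := exists_lt_of_lt_csSup hSne hlζ
        exact lt_of_lt_of_le (hmono (Set.mem_Ioi.mpr hl) (Set.mem_Ioi.mpr hsS.1) hls) hsS.2
      have hposζ : ∀ l, ζ < l → 0 < h l := by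
        intro l hζl
        have hl0 : 0 < l := hζ0.trans hζl
        by_contra hcneg
        push_neg at hcneg
        exact absurd (le_csSup hSbdd ⟨hl0, hcneg⟩) (not_le.mpr hζl)
      obtain ⟨L, hL, hlip⟩ := CsbpGreyAux.psi_lip hbm th (ζ + 1) hth
      by_cases hsign : h ζ ≤ 0
      · -- blow-up to the right of ζ
        have hζz' : ζ < z := by
          rcases eq_or_lt_of_le hζz with he | hlt
          · rw [← he] at hzpos; linarith
          · exact hlt
        set v := min (G t) (ζ + 1) with hv
        have hζv : ζ < v := lt_min (lt_of_lt_of_le hζz' hz2) (by linarith)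
        have hbnd : ∀ x ∈ Set.Ioo ζ v, (L * (x - ζ))⁻¹ ≤ |F x| := by
          intro x hx
          have hx1 : ζ < x := hx.1
          have hx0 : 0 < x := hζ0.trans hx1
          have hxz : x ≤ ζ + 1 := (lt_of_lt_of_le hx.2 (min_le_right _ _)).le
          have hΨx : 0 < Ψ x := by
            rw [hΨl x hx0.ne']
            exact mul_pos hx0 (hposζ x hx1)
          have hΨζ : Ψ ζ ≤ 0 := by
            rw [hΨl ζ hζ0.ne']
            exact mul_nonpos_iff.mpr (Or.inl ⟨hζ0.le, hsign⟩)
          have hlipx := hlip ζ x hθζ.le hx1.le hxz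
          have hΨxle : Ψ x ≤ L * (x - ζ) := by
            have h5 := (abs_le.mp hlipx).2
            linarith
          have hFx : |F x| = (Ψ x)⁻¹ := by
            rw [hFdef]
            simp only
            rw [inv_neg, abs_neg, abs_of_nonneg (inv_nonneg.mpr hΨx.le)]
          rw [hFx]
          exact inv_anti₀ hΨx hΨxle
        refine CsbpGreyAux.not_integrableOn_right hζv hL hbnd (hiiOn.mono_set ?_)
        intro x hx
        exact ⟨hθζ.trans hx.1, (lt_of_lt_of_le hx.2 (min_le_left _ _)).le⟩
      · push_neg at hsign
        set u := max th (ζ - 1) with hu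
        have huζ : u < ζ := max_lt hθζ (by linarith)
        have hbnd : ∀ x ∈ Set.Ioo u ζ, (L * (ζ - x))⁻¹ ≤ |F x| := by
          intro x hx
          have hthx : th < x := lt_of_le_of_lt (le_max_left _ _) hx.1
          have hx0 : 0 < x := hth.trans hthx
          have hΨx : Ψ x < 0 := by
            rw [hΨl x hx0.ne']
            exact mul_neg_of_pos_of_neg hx0 (hnegζ x hx0 hx.2)
          have hΨζ : 0 < Ψ ζ := by
            rw [hΨl ζ hζ0.ne']
            exact mul_pos hζ0 hsign
          have hlipx := hlip x ζ hthx.le hx.2.le (by linarith)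
          have hle : -(Ψ x) ≤ L * (ζ - x) := by
            have h5 := (abs_le.mp hlipx).2
            linarith
          have hFx : |F x| = (-(Ψ x))⁻¹ := by
            rw [hFdef]
            simp only
            rw [abs_of_nonneg (inv_nonneg.mpr (by linarith))]
          rw [hFx]
          exact inv_anti₀ (by linarith) hle
        refine CsbpGreyAux.not_integrableOn_left huζ hL hbnd (hiiOn.mono_set ?_)
        intro x hx
        exact ⟨lt_of_le_of_lt (le_max_left _ _) hx.1, hx.2.le.trans hζG⟩
    · push_neg at hcross
      have hnonneg : ∀ l ∈ Set.Icc th (G t), 0 ≤ F l := by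
        intro l hl
        have hl0 : 0 < l := lt_of_lt_of_le hth hl.1
        rcases eq_or_lt_of_le hl.1 with he | hlt
        · have : 0 < -(Ψ l) := by
            rw [← he] at hl0 ⊢
            rw [hΨl th hth.ne']
            nlinarith
          rw [hFdef]
          positivity
        · have hhl : h l ≤ 0 := hcross l ⟨hlt, hl.2⟩
          have : 0 ≤ -(Ψ l) := by
            rw [hΨl l hl0.ne']
            nlinarith
          rw [hFdef]
          simp only
          exact inv_nonneg.mpr this
      have h0 : 0 ≤ ∫ l in th..(G t), F l :=
        intervalIntegral.integral_nonneg hcon hnonneg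
      rw [intervalIntegral.integral_symm] at heq
      linarith [heq]
  -- Step 2 : exponential decay bound
  have step2 : ∀ (G : ℝ → ℝ) (th : ℝ), 0 < th → h th < 0 →
      (∀ t, 0 ≤ t → 0 < G t) → (∀ t, 0 ≤ t → (∫ l in (G t)..th, F l) = t) →
      (∀ t, 0 < t → G t < th) →
      ∀ t, 0 < t → G t ≤ th * Real.exp (h th * t) := by
    intro G th hth hhth hGpos hGeq hGlt t ht
    have hp := hGpos t ht.le
    have hplt := hGlt t ht
    set k := -h th with hk
    have hk0 : 0 < k := neg_pos.mpr hhth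
    have hcmp0 : (∫ l in (G t)..th, F l) ≤ k⁻¹ * (Real.log th - Real.log (G t)) := by
      have hInt1 : IntervalIntegrable F MeasureTheory.volume (G t) th :=
        hintF _ _ hp hplt.le hhth
      have hInt2 : IntervalIntegrable (fun l => (l * k)⁻¹) MeasureTheory.volume (G t) th := by
        apply ContinuousOn.intervalIntegrable
        apply ContinuousOn.inv₀
        · exact continuousOn_id.mul continuousOn_const
        · intro x hx
          rw [Set.uIcc_of_le hplt.le] at hx
          have : 0 < x := lt_of_lt_of_le hp hx.1
          exact ne_of_gt (mul_pos this hk0)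
      have hmono2 : ∀ l ∈ Set.Icc (G t) th, F l ≤ (l * k)⁻¹ := by
        intro l hl
        have hl0 : 0 < l := lt_of_lt_of_le hp hl.1
        have hhl : h l ≤ h th := by
          rcases eq_or_lt_of_le hl.2 with he | hlt2
          · rw [he]
          · exact (hmono (Set.mem_Ioi.mpr hl0) (Set.mem_Ioi.mpr hth) hlt2).le
        have hΨpos : 0 < l * k := mul_pos hl0 hk0
        have hΨle : l * k ≤ -(Ψ l) := by
          rw [hΨl l hl0.ne']
          rw [hk]
          nlinarith
        rw [hFdef]
        simp only
        exact inv_anti₀ hΨpos hΨle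
      have hstep := intervalIntegral.integral_mono_on hplt.le hInt1 hInt2 hmono2
      refine le_trans hstep (le_of_eq ?_)
      have he : (fun l : ℝ => (l * k)⁻¹) = fun l : ℝ => k⁻¹ * l⁻¹ := by
        funext l
        rw [mul_inv]
        ring
      rw [he, intervalIntegral.integral_const_mul, integral_inv
        (Set.notMem_uIcc_of_lt hp hth), Real.log_div hth.ne' hp.ne']
    have hcmp : t ≤ k⁻¹ * (Real.log th - Real.log (G t)) :=
      le_of_eq_of_le (hGeq t ht.le).symm hcmp0
    have hlog : Real.log (G t) ≤ Real.log th - k * t := by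
      have h1 := mul_le_mul_of_nonneg_left hcmp hk0.le
      rw [← mul_assoc, mul_inv_cancel₀ hk0.ne', one_mul] at h1
      linarith
    calc G t = Real.exp (Real.log (G t)) := (Real.exp_log hp).symm
      _ ≤ Real.exp (Real.log th - k * t) := Real.exp_le_exp.mpr hlog
      _ = th * Real.exp (h th * t) := by
        rw [Real.exp_sub, Real.exp_log hth, div_eq_mul_inv, ← Real.exp_neg]
        congr 1
        rw [hk]
        ring
  have hg_lt : ∀ t, 0 < t → g t < θ := step1 g θ w1 hθ hw1 hw1Ψ hg hgeq
  have hg'_lt : ∀ t, 0 < t → g' t < θ' := step1 g' θ' w2 hθ' hw2 hw2Ψ hg' hg'eq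
  have hg_decay : ∀ t, 0 < t → g t ≤ θ * Real.exp (h θ * t) :=
    step2 g θ hθ hhθ hg hgeq hg_lt
  have hg'_decay : ∀ t, 0 < t → g' t ≤ θ' * Real.exp (h θ' * t) :=
    step2 g' θ' hθ' hhθ' hg' hg'eq hg'_lt
  -- decay of the comparison functions
  have hθdecay : Tendsto (fun t : ℝ => θ * Real.exp (h θ * t)) atTop (𝓝 0) := by
    have h1 : Tendsto (fun t : ℝ => h θ * t) atTop atBot :=
      tendsto_id.const_mul_atTop_of_neg hhθ
    have h2 := (Real.tendsto_exp_atBot.comp h1).const_mul θ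
    simpa using h2
  have hθ'decay : Tendsto (fun t : ℝ => θ' * Real.exp (h θ' * t)) atTop (𝓝 0) := by
    have h1 : Tendsto (fun t : ℝ => h θ' * t) atTop atBot :=
      tendsto_id.const_mul_atTop_of_neg hhθ'
    have h2 := (Real.tendsto_exp_atBot.comp h1).const_mul θ'
    simpa using h2
  have hgto0 : Tendsto g atTop (𝓝 0) := by
    apply squeeze_zero'
    · filter_upwards [eventually_gt_atTop (0:ℝ)] with t ht
      exact (hg t ht.le).le
    · filter_upwards [eventually_gt_atTop (0:ℝ)] with t ht
      exact hg_decay t ht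
    · exact hθdecay
  refine ⟨hgto0, ?_⟩
  -- the ratio limit
  set A := ∫ l in θ'..θ, F l with hA
  have hexp_eq : (∫ l in θ'..θ, (Ψ l)⁻¹) = -A := by
    rw [hA, ← intervalIntegral.integral_neg]
    apply intervalIntegral.integral_congr
    intro l _
    show (Ψ l)⁻¹ = -(-(Ψ l))⁻¹
    rw [inv_neg, neg_neg]
  set m := max θ θ' with hm
  have hhm : h m < 0 := by
    rcases max_cases θ θ' with ⟨he, _⟩ | ⟨he, _⟩ <;> rw [hm, he] <;> assumption
  have hm0 : 0 < m := lt_of_lt_of_le hθ (le_max_left _ _)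
  have hii2 : ∀ x y : ℝ, 0 < x → 0 < y → x ≤ m → y ≤ m →
      IntervalIntegrable F MeasureTheory.volume x y := by
    intro x y hx hy hxm hym
    have hnegm : ∀ q : ℝ, 0 < q → q ≤ m → h q < 0 := by
      intro q hq hqm
      rcases eq_or_lt_of_le hqm with he | hlt
      · rw [he]; exact hhm
      · exact lt_of_le_of_lt
          ((hmono (Set.mem_Ioi.mpr hq) (Set.mem_Ioi.mpr hm0) hlt).le) hhm
    rcases le_total x y with hxy | hxy
    · exact hintF x y hx hxy (hnegm y hy hym)
    · exact (hintF y x hy hxy (hnegm x hx hxm)).symm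
  have hchain : ∀ t, 0 < t → (∫ l in (g t)..(g' t), F l) = -A := by
    intro t ht
    have hp := hg t ht.le
    have hq := hg' t ht.le
    have h1 := hg_lt t ht
    have h2 := hg'_lt t ht
    have hgm : g t ≤ m := le_trans h1.le (le_max_left _ _)
    have hg'm : g' t ≤ m := le_trans h2.le (le_max_right _ _)
    have hθm : θ ≤ m := le_max_left _ _
    have hθ'm : θ' ≤ m := le_max_right _ _
    have e1 := intervalIntegral.integral_add_adjacent_intervals
      (hii2 (g t) θ hp hθ hgm hθm) (hii2 θ θ' hθ hθ' hθm hθ'm)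
    have e2 := intervalIntegral.integral_add_adjacent_intervals
      (IntervalIntegrable.trans (hii2 (g t) θ hp hθ hgm hθm)
        (hii2 θ θ' hθ hθ' hθm hθ'm)) (hii2 θ' (g' t) hθ' hq hθ'm hg'm)
    have e3 : (∫ l in θ..θ', F l) = -A := by
      rw [hA, intervalIntegral.integral_symm]
    have e4 : (∫ l in θ'..(g' t), F l) = -t := by
      rw [intervalIntegral.integral_symm, hg'eq t ht.le]
    have e5 := hgeq t ht.le
    rw [← e1, e3, e4, e5] at e2
    linarith [e2]
  -- negativity of h below min θ θ'
  have hsmall : ∀ l : ℝ, 0 < l → l ≤ min θ θ' → h l < 0 := by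
    intro l hl hlm
    have : l < w1 := lt_of_le_of_lt (hlm.trans (min_le_left _ _)) hw1
    exact hkey l w1 hl this hw1Ψ
  -- the log-difference tends to -(c*A)... i.e. c * (-A)
  have hlog : Tendsto (fun t => Real.log (g t) - Real.log (g' t)) atTop (𝓝 (c * (-A))) := by
    rw [Metric.tendsto_nhds]
    intro ε hε
    set ε₁ := min (ε / (|A| + 1)) (-c / 2) with hε₁def
    have hε₁0 : 0 < ε₁ := lt_min (by positivity) (by linarith)
    have hε₁c : c + ε₁ < 0 := by
      have : ε₁ ≤ -c / 2 := min_le_right _ _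
      linarith
    have hev := Metric.tendsto_nhds.mp hder ε₁ hε₁0
    obtain ⟨δ0, hδ0, hδprop⟩ := Metric.mem_nhdsWithin_iff.mp hev
    set δ := min δ0 (min θ θ') with hδdef
    have hδpos : 0 < δ := lt_min hδ0 (lt_min hθ hθ')
    have hδθ : δ ≤ min θ θ' := min_le_right _ _
    have hclose : ∀ l : ℝ, 0 < l → l < δ → |h l - c| < ε₁ := by
      intro l hl hlδ
      have : l ∈ Metric.ball (0:ℝ) δ0 ∩ Set.Ioi 0 := by
        constructor
        · rw [Metric.mem_ball, Real.dist_eq, sub_zero, abs_of_pos hl]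
          exact lt_of_lt_of_le hlδ (min_le_left _ _)
        · exact hl
      have := hδprop this
      rw [Set.mem_setOf_eq] at this
      rw [← Real.dist_eq]
      exact this
    have hevt : ∀ᶠ t in atTop, g t < δ ∧ g' t < δ ∧ 0 < t := by
      have hev1 : ∀ᶠ t in atTop, θ * Real.exp (h θ * t) < δ :=
        hθdecay.eventually_lt_const hδpos
      have hev2 : ∀ᶠ t in atTop, θ' * Real.exp (h θ' * t) < δ :=
        hθ'decay.eventually_lt_const hδpos
      filter_upwards [hev1, hev2, eventually_gt_atTop (0:ℝ)] with t h1 h2 h3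
      exact ⟨lt_of_le_of_lt (hg_decay t h3) h1, lt_of_le_of_lt (hg'_decay t h3) h2, h3⟩
    filter_upwards [hevt] with t ⟨hgδ, hg'δ, ht⟩
    have hp := hg t ht.le
    have hq := hg' t ht.le
    have hB := hchain t ht
    -- pointwise comparison on the interval between g t and g' t
    have hcomp : ∀ l : ℝ, 0 < l → l < δ →
        (0 < F l ∧ (-c - ε₁) * F l ≤ l⁻¹ ∧ l⁻¹ ≤ (-c + ε₁) * F l) := by
      intro l hl hlδ
      have hcl := hclose l hl hlδ
      have habs := abs_lt.mp hcl
      have hhl : h l < 0 := by linarith [habs.2]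
      have hFll : F l = (l * (-h l))⁻¹ := by
        rw [hFdef]
        simp only
        rw [hΨl l hl.ne']
        ring_nf
      have hFpos' : 0 < F l := by
        rw [hFll]
        exact inv_pos.mpr (mul_pos hl (by linarith))
      have hne : -h l ≠ 0 := by linarith
      have hinv : l⁻¹ = (-h l) * F l := by
        rw [hFll, mul_inv, ← mul_assoc, mul_comm (-h l) l⁻¹, mul_assoc,
          mul_inv_cancel₀ hne, mul_one]
      refine ⟨hFpos', ?_, ?_⟩
      · rw [hinv]
        exact mul_le_mul_of_nonneg_right (by linarith [habs.1]) hFpos'.le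
      · rw [hinv]
        exact mul_le_mul_of_nonneg_right (by linarith [habs.2]) hFpos'.le
    -- case analysis on the order of g t and g' t
    have hmain : |(Real.log (g' t) - Real.log (g t)) - c * A| ≤ ε₁ * |A| := by
      rcases le_total (g t) (g' t) with hle | hle
      · have hIF : IntervalIntegrable F MeasureTheory.volume (g t) (g' t) :=
          hii2 _ _ hp hq (le_trans (hg_lt t ht).le (le_max_left _ _))
            (le_trans (hg'_lt t ht).le (le_max_right _ _))
        have hIinv : IntervalIntegrable (fun l : ℝ => l⁻¹) MeasureTheory.volume (g t) (g' t) := by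
          apply ContinuousOn.intervalIntegrable
          apply ContinuousOn.inv₀ continuousOn_id
          intro x hx
          rw [Set.uIcc_of_le hle] at hx
          exact ne_of_gt (lt_of_lt_of_le hp hx.1)
        have hbd : ∀ l ∈ Set.Icc (g t) (g' t), 0 < l ∧ l < δ := by
          intro l hl
          exact ⟨lt_of_lt_of_le hp hl.1, lt_of_le_of_lt hl.2 hg'δ⟩
        have hlow := intervalIntegral.integral_mono_on hle
          (hIF.const_mul (-c - ε₁)) hIinv
          (fun l hl => ((hcomp l (hbd l hl).1 (hbd l hl).2).2.1))
        have hup := intervalIntegral.integral_mono_on hle hIinv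
          (hIF.const_mul (-c + ε₁))
          (fun l hl => ((hcomp l (hbd l hl).1 (hbd l hl).2).2.2))
        rw [intervalIntegral.integral_const_mul, hB] at hlow hup
        have hloginv : (∫ l in (g t)..(g' t), l⁻¹)
            = Real.log (g' t) - Real.log (g t) := by
          rw [integral_inv (Set.notMem_uIcc_of_lt hp hq),
            Real.log_div hq.ne' hp.ne']
        rw [hloginv] at hlow hup
        have hApos : 0 ≤ -A := by
          rw [← hB]
          apply intervalIntegral.integral_nonneg hle
          intro l hl
          exact (hcomp l (hbd l hl).1 (hbd l hl).2).1.le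
        have hAabs : |A| = -A := abs_of_nonpos (by linarith)
        have he1 : (-c - ε₁) * (-A) = c * A + ε₁ * A := by ring
        have he2 : (-c + ε₁) * (-A) = c * A - ε₁ * A := by ring
        have he3 : ε₁ * |A| = -(ε₁ * A) := by rw [hAabs]; ring
        rw [abs_le]
        constructor <;> linarith
      · have hIF : IntervalIntegrable F MeasureTheory.volume (g' t) (g t) :=
          hii2 _ _ hq hp (le_trans (hg'_lt t ht).le (le_max_right _ _))
            (le_trans (hg_lt t ht).le (le_max_left _ _))
        have hIinv : IntervalIntegrable (fun l : ℝ => l⁻¹) MeasureTheory.volume (g' t) (g t) := by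
          apply ContinuousOn.intervalIntegrable
          apply ContinuousOn.inv₀ continuousOn_id
          intro x hx
          rw [Set.uIcc_of_le hle] at hx
          exact ne_of_gt (lt_of_lt_of_le hq hx.1)
        have hbd : ∀ l ∈ Set.Icc (g' t) (g t), 0 < l ∧ l < δ := by
          intro l hl
          exact ⟨lt_of_lt_of_le hq hl.1, lt_of_le_of_lt hl.2 hgδ⟩
        have hlow := intervalIntegral.integral_mono_on hle
          (hIF.const_mul (-c - ε₁)) hIinv
          (fun l hl => ((hcomp l (hbd l hl).1 (hbd l hl).2).2.1))
        have hup := intervalIntegral.integral_mono_on hle hIinv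
          (hIF.const_mul (-c + ε₁))
          (fun l hl => ((hcomp l (hbd l hl).1 (hbd l hl).2).2.2))
        have hBrev : (∫ l in (g' t)..(g t), F l) = A := by
          rw [intervalIntegral.integral_symm, hB]
          ring
        rw [intervalIntegral.integral_const_mul, hBrev] at hlow hup
        have hloginv : (∫ l in (g' t)..(g t), l⁻¹)
            = Real.log (g t) - Real.log (g' t) := by
          rw [integral_inv (Set.notMem_uIcc_of_lt hq hp),
            Real.log_div hp.ne' hq.ne']
        rw [hloginv] at hlow hup
        have hApos : 0 ≤ A := by
          rw [← hBrev]
          apply intervalIntegral.integral_nonneg hle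
          intro l hl
          exact (hcomp l (hbd l hl).1 (hbd l hl).2).1.le
        have hAabs : |A| = A := abs_of_nonneg hApos
        have he1 : (-c - ε₁) * A = -(c * A) - ε₁ * A := by ring
        have he2 : (-c + ε₁) * A = -(c * A) + ε₁ * A := by ring
        have he3 : ε₁ * |A| = ε₁ * A := by rw [hAabs]
        have he4 : Real.log (g' t) - Real.log (g t)
            = -(Real.log (g t) - Real.log (g' t)) := by ring
        rw [abs_le]
        constructor <;> linarith
    -- conclude the metric estimate
    rw [Real.dist_eq]
    have he : (Real.log (g t) - Real.log (g' t)) - c * (-A)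
        = -((Real.log (g' t) - Real.log (g t)) - c * A) := by ring
    rw [he, abs_neg]
    have hfin : ε₁ * |A| < ε := by
      have h1 : ε₁ ≤ ε / (|A| + 1) := min_le_left _ _
      have h2 : 0 ≤ |A| := abs_nonneg A
      have h3 : ε₁ * |A| ≤ (ε / (|A| + 1)) * |A| := mul_le_mul_of_nonneg_right h1 h2
      have h4 : (ε / (|A| + 1)) * |A| < ε := by
        rw [div_mul_eq_mul_div, div_lt_iff₀ (by linarith)]
        nlinarith
      linarith
    exact lt_of_le_of_lt hmain hfin
  -- transfer to the ratio
  rw [hexp_eq]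
  have hfinal : Tendsto (fun t => Real.exp (Real.log (g t) - Real.log (g' t)))
      atTop (𝓝 (Real.exp (c * (-A)))) := (Real.continuous_exp.tendsto _).comp hlog
  refine hfinal.congr' ?_
  filter_upwards [eventually_gt_atTop (0:ℝ)] with t ht
  rw [Real.exp_sub, Real.exp_log (hg t ht.le), Real.exp_log (hg' t ht.le)]
end

section
/- Let Ψ be a non-linear branching mechanism of finite variation type with Ψ′(0+) := lim_{λ→0+} Ψ(λ)/λ ∈ [0,∞) (so Ψ > 0 on (0,∞) and D ∈ (0,∞)). Fix θ, θ′ ∈ (0,∞) and let g_θ, g_{θ′} : [0,∞) → (0,∞) satisfy ∫_{θ}^{g_θ(t)} dλ/Ψ(λ) = t and ∫_{θ′}^{g_{θ′}(t)} dλ/Ψ(λ) = t for all t ≥ 0. Then g_θ(t) → ∞ as t → ∞, and g_θ(t)/g_{θ′}(t) → exp( D ∫_{θ′}^{θ} dλ/Ψ(λ) ) as t → ∞. -/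
open MeasureTheory Set Filter Topology
open scoped ENNReal NNReal

lemma aux_xexp_lt {x : ℝ} (hx : 0 < x) : x * Real.exp (-x) < 1 - Real.exp (-x) := by
  have h := Real.add_one_lt_exp (x := x) hx.ne'
  have he : 0 < Real.exp (-x) := Real.exp_pos _
  have h2 : (x + 1) * Real.exp (-x) < Real.exp x * Real.exp (-x) :=
    mul_lt_mul_of_pos_right h he
  rw [← Real.exp_add] at h2
  simp only [add_neg_cancel, Real.exp_zero] at h2
  nlinarith

lemma aux_one_sub_exp_le {u : ℝ} : 1 - Real.exp (-u) ≤ u := by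
  have := Real.add_one_le_exp (-u); linarith

lemma aux_q_anti_strict {x y : ℝ} (hx : 0 < x) (hxy : x < y) :
    (1 - Real.exp (-y)) / y < (1 - Real.exp (-x)) / x := by
  have hy : 0 < y := hx.trans hxy
  have hA : 0 < Real.exp (-x) := Real.exp_pos _
  have hB : Real.exp (-y) = Real.exp (-x) * Real.exp (-(y - x)) := by
    rw [← Real.exp_add]; ring_nf
  have h1 : 1 - Real.exp (-(y - x)) ≤ y - x := aux_one_sub_exp_le
  have h2 : x * Real.exp (-x) < 1 - Real.exp (-x) := aux_xexp_lt hx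
  have key : (1 - Real.exp (-x) * Real.exp (-(y - x))) * x < (1 - Real.exp (-x)) * y := by
    nlinarith [mul_le_mul_of_nonneg_left h1 (mul_pos hx hA).le,
      mul_lt_mul_of_pos_left h2 (sub_pos.mpr hxy)]
  rw [div_lt_div_iff₀ hy hx, hB]
  exact key

lemma aux_q_anti {x y : ℝ} (hx : 0 < x) (hxy : x ≤ y) :
    (1 - Real.exp (-y)) / y ≤ (1 - Real.exp (-x)) / x := by
  rcases eq_or_lt_of_le hxy with rfl | h
  · exact le_refl _
  · exact (aux_q_anti_strict hx h).le

lemma aux_exp_quad {x : ℝ} (hx : 0 ≤ x) : Real.exp (-x) - 1 + x ≤ x ^ 2 / 2 := by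
  set F : ℝ → ℝ := fun t => t ^ 2 / 2 - (Real.exp (-t) - 1 + t) with hF
  have hder : ∀ y : ℝ, HasDerivAt F (y - (1 - Real.exp (-y))) y := by
    intro y
    have h1 : HasDerivAt (fun t : ℝ => Real.exp (-t)) (-Real.exp (-y)) y := by
      simpa [Function.comp_def] using (Real.hasDerivAt_exp (-y)).comp y (hasDerivAt_neg y)
    have h2 : HasDerivAt (fun t : ℝ => t ^ 2 / 2) y y := by
      simpa using (hasDerivAt_pow 2 y).div_const 2
    have := (h2.sub ((h1.sub_const 1).add (hasDerivAt_id y)))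
    exact this.congr_deriv (by ring)
  have hmono : MonotoneOn F (Set.Ici (0:ℝ)) := by
    apply monotoneOn_of_deriv_nonneg (convex_Ici 0)
      (fun y _ => (hder y).continuousAt.continuousWithinAt)
      (fun y _ => (hder y).differentiableAt.differentiableWithinAt)
    intro y hy
    rw [(hder y).deriv]
    have : 1 - Real.exp (-y) ≤ y := aux_one_sub_exp_le
    linarith
  have h0 : F 0 ≤ F x := hmono (Set.mem_Ici.2 le_rfl) hx (by exact hx)
  simp [hF] at h0
  linarith


noncomputable def phiAux (l r : ℝ) : ℝ :=
  (Real.exp (-l * r) - 1) / l + (if r < 1 then r else 0)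

noncomputable def phiInf (r : ℝ) : ℝ := if r < 1 then r else 0

lemma aux_div_scale {l r : ℝ} (hl : 0 < l) (hr : 0 < r) :
    (1 - Real.exp (-(l * r))) / l = r * ((1 - Real.exp (-(l * r))) / (l * r)) := by
  field_simp

lemma phiAux_strictMono {l₁ l₂ r : ℝ} (h1 : 0 < l₁) (h12 : l₁ < l₂) (hr : 0 < r) :
    phiAux l₁ r < phiAux l₂ r := by
  unfold phiAux
  have key : (1 - Real.exp (-(l₂ * r))) / l₂ < (1 - Real.exp (-(l₁ * r))) / l₁ := by
    rw [aux_div_scale (h1.trans h12) hr, aux_div_scale h1 hr]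
    exact mul_lt_mul_of_pos_left
      (aux_q_anti_strict (mul_pos h1 hr) (by nlinarith)) hr
  have e1 : (Real.exp (-l₁ * r) - 1) / l₁ = -((1 - Real.exp (-(l₁ * r))) / l₁) := by
    rw [neg_mul]; ring
  have e2 : (Real.exp (-l₂ * r) - 1) / l₂ = -((1 - Real.exp (-(l₂ * r))) / l₂) := by
    rw [neg_mul]; ring
  rw [e1, e2]
  gcongr -- maybe fails; fallback linarith
  
lemma phiAux_le_phiInf {l r : ℝ} (hl : 0 < l) (hr : 0 < r) :
    phiAux l r ≤ phiInf r := by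
  unfold phiAux phiInf
  have : Real.exp (-l * r) ≤ 1 := by
    rw [Real.exp_le_one_iff]; nlinarith
  have h2 : (Real.exp (-l * r) - 1) / l ≤ 0 :=
    div_nonpos_of_nonpos_of_nonneg (by linarith) hl.le
  linarith

lemma phiInf_sub_phiAux {l r : ℝ} (hl : 0 < l) (hr : 0 < r) :
    phiInf r - phiAux l r = (1 - Real.exp (-(l * r))) / l := by
  unfold phiAux phiInf; rw [neg_mul]; ring

lemma phiInf_sub_phiAux_le_inv {l r : ℝ} (hl : 0 < l) (hr : 0 < r) :
    phiInf r - phiAux l r ≤ l⁻¹ := by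
  rw [phiInf_sub_phiAux hl hr]
  rw [← one_div]
  gcongr
  linarith [Real.exp_pos (-(l * r))]

lemma phiAux_quad_bound {l r : ℝ} (hl : 0 ≤ l) (hr0 : 0 < r) (hr1 : r < 1) :
    |Real.exp (-l * r) - 1 + (if r < 1 then l * r else 0)| ≤ l ^ 2 / 2 * r := by
  rw [if_pos hr1]
  have h1 : 0 ≤ Real.exp (-l * r) - 1 + l * r := by
    have := Real.add_one_le_exp (-(l * r)); rw [neg_mul]; nlinarith
  have h2 : Real.exp (-l * r) - 1 + l * r ≤ (l * r) ^ 2 / 2 := by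
    have := aux_exp_quad (x := l * r) (by positivity); rw [neg_mul]; linarith
  rw [abs_of_nonneg h1]
  have : (l * r) ^ 2 / 2 ≤ l ^ 2 / 2 * r := by nlinarith
  linarith

lemma phiAux_mono {l₁ l₂ r : ℝ} (h1 : 0 < l₁) (h12 : l₁ ≤ l₂) (hr : 0 < r) :
    phiAux l₁ r ≤ phiAux l₂ r := by
  rcases eq_or_lt_of_le h12 with rfl | h
  · exact le_refl _
  · exact (phiAux_strictMono h1 h hr).le

lemma phiAux_eq {l : ℝ} (hl : l ≠ 0) (r : ℝ) :
    phiAux l r = (Real.exp (-l * r) - 1 + (if r < 1 then l * r else 0)) / l := by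
  unfold phiAux
  rcases lt_or_ge r 1 with h | h
  · rw [if_pos h, if_pos h]; field_simp
  · rw [if_neg (not_lt.2 h), if_neg (not_lt.2 h)]; field_simp; ring

lemma phiAux_measurable (l : ℝ) : Measurable (phiAux l) := by
  unfold phiAux
  exact (((Real.measurable_exp.comp ((measurable_id.const_mul (-l))))
    |>.sub measurable_const).div_const l).add
    (Measurable.ite measurableSet_Iio measurable_id measurable_const)

lemma phiInf_measurable : Measurable phiInf :=
  Measurable.ite measurableSet_Iio measurable_id measurable_const

section MeasurePart
variable {μ : Measure ℝ} (hcar : μ (Set.Ioi (0:ℝ))ᶜ = 0)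
  (hfin2 : (∫⁻ r, ENNReal.ofReal (min 1 (r ^ 2)) ∂μ) < ⊤)
  (hfv1 : (∫⁻ r in Set.Ioo (0:ℝ) 1, ENNReal.ofReal r ∂μ) < ⊤)
include hcar hfin2 hfv1 in

include hcar hfin2 hfv1 in
lemma haemem : ∀ᵐ r ∂μ, r ∈ Set.Ioi (0:ℝ) := by
  rw [ae_iff]
  have h : {x : ℝ | ¬ x ∈ Set.Ioi 0} = (Set.Ioi (0:ℝ))ᶜ := rfl
  rw [h]; exact hcar

include hcar hfin2 hfv1 in
lemma hres : μ.restrict (Set.Ioi 0) = μ :=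
  Measure.restrict_eq_self_of_ae_mem (haemem hcar hfin2 hfv1)

include hcar hfin2 hfv1 in
lemma hIci : μ (Set.Ici 1) < ⊤ := by
  have h1 : μ (Set.Ici 1) = ∫⁻ r in Set.Ici 1, ENNReal.ofReal (min 1 (r ^ 2)) ∂μ := by
    rw [← setLIntegral_one]
    apply setLIntegral_congr_fun measurableSet_Ici
    intro r hr; dsimp only
    have hr' : (1:ℝ) ≤ r := hr
    rw [min_eq_left (by nlinarith : (1:ℝ) ≤ r ^ 2), ENNReal.ofReal_one]
  rw [h1]
  exact lt_of_le_of_lt (setLIntegral_le_lintegral _ _) hfin2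

include hcar hfin2 hfv1 in
lemma hIoo_r : IntegrableOn (fun r => r) (Set.Ioo (0:ℝ) 1) μ := by
  refine ⟨measurable_id.aestronglyMeasurable, ?_⟩
  rw [hasFiniteIntegral_iff_norm]
  have : ∫⁻ r in Set.Ioo (0:ℝ) 1, ENNReal.ofReal ‖(r:ℝ)‖ ∂μ
      = ∫⁻ r in Set.Ioo (0:ℝ) 1, ENNReal.ofReal r ∂μ := by
    apply setLIntegral_congr_fun measurableSet_Ioo
    intro r hr; dsimp only
    rw [Real.norm_eq_abs, abs_of_pos hr.1]
  rw [this]; exact hfv1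

include hcar hfin2 hfv1 in
lemma integrable_of_split {f : ℝ → ℝ} (hm : Measurable f)
    (h1 : IntegrableOn f (Set.Ioo 0 1) μ) (h2 : IntegrableOn f (Set.Ici 1) μ) :
    Integrable f μ := by
  have : Set.Ioo (0:ℝ) 1 ∪ Set.Ici 1 = Set.Ioi 0 := Set.Ioo_union_Ici_eq_Ioi zero_lt_one
  have hu : IntegrableOn f (Set.Ioi 0) μ := by rw [← this]; exact h1.union h2
  rw [← hres hcar hfin2 hfv1]; exact hu

include hcar hfin2 hfv1 in
lemma int_phiAux {l : ℝ} (hl : 0 < l) : Integrable (phiAux l) μ := by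
  apply integrable_of_split hcar hfin2 hfv1 (phiAux_measurable l)
  · apply Integrable.mono' (((hIoo_r hcar hfin2 hfv1).const_mul (l / 2)))
      (phiAux_measurable l).aestronglyMeasurable.restrict
    rw [ae_restrict_iff' measurableSet_Ioo]
    filter_upwards with r hr
    rw [phiAux_eq hl.ne', Real.norm_eq_abs, abs_div, abs_of_pos hl, div_le_iff₀ hl]
    calc |Real.exp (-l * r) - 1 + (if r < 1 then l * r else 0)|
        ≤ l ^ 2 / 2 * r := phiAux_quad_bound hl.le hr.1 hr.2
      _ = l / 2 * r * l := by ring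
  · apply Integrable.mono' ((integrableOn_const (hIci hcar hfin2 hfv1).ne :
      IntegrableOn (fun _ => l⁻¹) (Set.Ici 1) μ))
      (phiAux_measurable l).aestronglyMeasurable.restrict
    rw [ae_restrict_iff' measurableSet_Ici]
    filter_upwards with r hr
    unfold phiAux
    rw [if_neg (not_lt.2 hr)]
    have h0 : 0 < l * r := mul_pos hl (lt_of_lt_of_le zero_lt_one hr)
    have he : Real.exp (-l * r) ≤ 1 := by
      rw [Real.exp_le_one_iff]; nlinarith
    have he0 : 0 < Real.exp (-l * r) := Real.exp_pos _
    rw [add_zero, Real.norm_eq_abs, abs_div, abs_of_pos hl, div_le_iff₀ hl,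
      inv_mul_cancel₀ hl.ne', abs_le]
    constructor <;> linarith

include hcar hfin2 hfv1 in
lemma int_phiInf : Integrable phiInf μ := by
  apply integrable_of_split hcar hfin2 hfv1 phiInf_measurable
  · exact ((hIoo_r hcar hfin2 hfv1).congr_fun (fun r hr => (if_pos hr.2).symm) measurableSet_Ioo)
  · have : IntegrableOn (fun _ => (0:ℝ)) (Set.Ici 1) μ := (integrable_zero _ _ _).integrableOn
    exact this.congr_fun (fun r hr => (if_neg (not_lt.2 hr)).symm) measurableSet_Ici

include hcar hfin2 hfv1 in
lemma int_phiInf_eq : ∫ r, phiInf r ∂μ = ∫ r in Set.Ioo (0:ℝ) 1, r ∂μ := by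
  have h1 : ∫ r, phiInf r ∂μ = ∫ r in Set.Ioi (0:ℝ), phiInf r ∂μ := by
    rw [hres hcar hfin2 hfv1]
  have hsplit : Set.Ioo (0:ℝ) 1 ∪ Set.Ici 1 = Set.Ioi 0 := Set.Ioo_union_Ici_eq_Ioi zero_lt_one
  have hdisj : Disjoint (Set.Ioo (0:ℝ) 1) (Set.Ici 1) := by
    rw [Set.disjoint_left]; intro x hx hx'; exact absurd hx.2 (not_lt.2 hx')
  rw [h1, ← hsplit, setIntegral_union hdisj measurableSet_Ici
    ((int_phiInf hcar hfin2 hfv1).integrableOn) ((int_phiInf hcar hfin2 hfv1).integrableOn)]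
  have h2 : ∫ r in Set.Ioo (0:ℝ) 1, phiInf r ∂μ = ∫ r in Set.Ioo (0:ℝ) 1, r ∂μ :=
    setIntegral_congr_fun measurableSet_Ioo (fun r hr => if_pos hr.2)
  have h3 : ∫ r in Set.Ici (1:ℝ), phiInf r ∂μ = 0 := by
    have he : Set.EqOn phiInf (fun _ => (0:ℝ)) (Set.Ici 1) := fun r hr => if_neg (not_lt.2 hr)
    rw [setIntegral_congr_fun measurableSet_Ici he, integral_zero]
  rw [h2, h3, add_zero]

include hcar hfin2 hfv1 in
lemma int_phiAux_lt (hne : μ ≠ 0) {l₁ l₂ : ℝ} (h1 : 0 < l₁) (h12 : l₁ < l₂) :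
    (∫ r, phiAux l₁ r ∂μ) < ∫ r, phiAux l₂ r ∂μ := by
  have hint1 := int_phiAux hcar hfin2 hfv1 h1
  have hint2 := int_phiAux hcar hfin2 hfv1 (h1.trans h12)
  have key : 0 < ∫ r, (phiAux l₂ r - phiAux l₁ r) ∂μ := by
    rw [integral_pos_iff_support_of_nonneg_ae]
    · have hsub : Set.Ioi (0:ℝ) ⊆ Function.support (fun r => phiAux l₂ r - phiAux l₁ r) := by
        intro r hr
        exact (sub_pos.2 (phiAux_strictMono h1 h12 hr)).ne'
      have hpos : 0 < μ (Set.Ioi (0:ℝ)) := by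
        rw [pos_iff_ne_zero]
        intro h0
        apply hne
        have : μ Set.univ = 0 := by
          have := measure_union_le (μ := μ) (Set.Ioi (0:ℝ)) (Set.Ioi (0:ℝ))ᶜ
          rw [Set.union_compl_self, h0, hcar] at this
          simpa using this
        exact Measure.measure_univ_eq_zero.1 this
      exact lt_of_lt_of_le hpos (measure_mono hsub)
    · filter_upwards [haemem hcar hfin2 hfv1] with r hr
      exact sub_nonneg.2 (phiAux_mono h1 h12.le hr)
    · exact hint2.sub hint1
  have := integral_sub hint2 hint1
  rw [this] at key
  linarith

include hcar hfin2 hfv1 in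
lemma int_phiAux_tendsto : Tendsto (fun l => ∫ r, phiAux l r ∂μ) atTop
    (𝓝 (∫ r, phiInf r ∂μ)) := by
  apply tendsto_integral_filter_of_dominated_convergence
    (fun r => |phiInf r| + (phiInf r - phiAux 1 r))
  · exact Eventually.of_forall fun l => (phiAux_measurable l).aestronglyMeasurable
  · filter_upwards [eventually_ge_atTop (1:ℝ)] with l hl
    filter_upwards [haemem hcar hfin2 hfv1] with r hr
    have h1 : phiAux 1 r ≤ phiAux l r := phiAux_mono one_pos hl hr
    have h2 : phiAux l r ≤ phiInf r := phiAux_le_phiInf (lt_of_lt_of_le one_pos hl) hr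
    have h3 : phiAux 1 r ≤ phiInf r := phiAux_le_phiInf one_pos hr
    rw [Real.norm_eq_abs, abs_le]
    constructor
    · have : -|phiInf r| ≤ phiInf r := neg_abs_le _
      linarith
    · have : phiInf r ≤ |phiInf r| := le_abs_self _
      linarith
  · exact ((int_phiInf hcar hfin2 hfv1).abs).add
      ((int_phiInf hcar hfin2 hfv1).sub (int_phiAux hcar hfin2 hfv1 one_pos))
  · filter_upwards [haemem hcar hfin2 hfv1] with r hr
    have hsq : Tendsto (fun l => phiInf r - phiAux l r) atTop (𝓝 0) := by
      apply squeeze_zero'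
      · filter_upwards [eventually_gt_atTop (0:ℝ)] with l hl
        exact sub_nonneg.2 (phiAux_le_phiInf hl hr)
      · filter_upwards [eventually_gt_atTop (0:ℝ)] with l hl
        exact phiInf_sub_phiAux_le_inv hl hr
      · exact tendsto_inv_atTop_zero
    have := hsq.const_sub (phiInf r)
    simpa using this

end MeasurePart

/-- let `Ψ` be a non-linear branching mechanism of finite variation type
with `Ψ′(0+) = c ∈ [0,∞)`. Fix `θ, θ′ > 0` and let `g_θ, g_{θ′} : [0,∞) → (0,∞)`
satisfy `∫_{θ}^{g_θ(t)} dλ/Ψ(λ) = t` (and similarly for `θ′`). Then `g_θ(t) → ∞`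
and `g_θ(t)/g_{θ′}(t) → exp(D ∫_{θ′}^{θ} dλ/Ψ(λ))` as `t → ∞`. -/
theorem csbp_grey_backward_flow_ratio_subcritical
    (Ψ : ℝ → ℝ) (a b : ℝ) (piM : Measure ℝ)
    (hbm : IsBranchingMechanism Ψ a b piM) (hnl : IsNonLinear b piM)
    (hfv : FiniteVariationType b piM)
    (c : ℝ) (hc : 0 ≤ c) (hder : Tendsto (fun l => Ψ l / l) (𝓝[>] 0) (𝓝 c))
    (θ θ' : ℝ) (hθ : 0 < θ) (hθ' : 0 < θ')
    (g g' : ℝ → ℝ)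
    (hg : ∀ t : ℝ, 0 ≤ t → 0 < g t) (hg' : ∀ t : ℝ, 0 ≤ t → 0 < g' t)
    (hgeq : ∀ t : ℝ, 0 ≤ t → (∫ l in θ..(g t), (Ψ l)⁻¹) = t)
    (hg'eq : ∀ t : ℝ, 0 ≤ t → (∫ l in θ'..(g' t), (Ψ l)⁻¹) = t) :
    Tendsto g atTop atTop ∧
      Tendsto (fun t => g t / g' t) atTop
        (𝓝 (Real.exp (Dconst a piM * ∫ l in θ'..θ, (Ψ l)⁻¹))) := by
  obtain ⟨hb0, hcar, hfin2, hshape⟩ := hbm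
  obtain ⟨hbeq, hfv1⟩ := hfv
  subst hbeq
  have hne : piM ≠ 0 := hnl.resolve_left (lt_irrefl 0)
  -- Ψ(l)/l = a + ∫ φ_l
  have hΨeq : ∀ l : ℝ, 0 < l → Ψ l / l = a + ∫ r, phiAux l r ∂piM := by
    intro l hl
    have hK : (fun r => Real.exp (-l * r) - 1 + (if r < 1 then l * r else 0))
        = fun r => l * phiAux l r := by
      funext r
      rw [phiAux_eq hl.ne' r, mul_div_cancel₀ _ hl.ne']
    rw [hshape l hl.le]
    unfold psiShape
    rw [hK, MeasureTheory.integral_const_mul]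
    field_simp
    ring
  -- monotonicity of l ↦ Ψ l / l
  have hmono : ∀ {x y : ℝ}, 0 < x → x < y → Ψ x / x < Ψ y / y := by
    intro x y hx hxy
    rw [hΨeq x hx, hΨeq y (hx.trans hxy)]
    linarith [int_phiAux_lt hcar hfin2 hfv1 hne hx hxy]
  set D : ℝ := Dconst a piM with hD
  -- limit at infinity
  have htop : Tendsto (fun l => Ψ l / l) atTop (𝓝 D) := by
    have h1 : Tendsto (fun l => a + ∫ r, phiAux l r ∂piM) atTop
        (𝓝 (a + ∫ r, phiInf r ∂piM)) :=
      (int_phiAux_tendsto hcar hfin2 hfv1).const_add a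
    have h2 : D = a + ∫ r, phiInf r ∂piM := by
      rw [hD]; unfold Dconst; rw [int_phiInf_eq hcar hfin2 hfv1]
    rw [h2]
    apply h1.congr'
    filter_upwards [eventually_gt_atTop (0:ℝ)] with l hl
    exact (hΨeq l hl).symm
  -- c is a lower bound
  have hge_c : ∀ l : ℝ, 0 < l → c ≤ Ψ l / l := by
    intro l hl
    apply le_of_tendsto hder
    filter_upwards [Ioo_mem_nhdsGT hl] with x hx
    exact (hmono hx.1 hx.2).le
  -- positivity of Ψ
  have hΨpos : ∀ l : ℝ, 0 < l → 0 < Ψ l := by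
    intro l hl
    have h1 : c ≤ Ψ (l / 2) / (l / 2) := hge_c _ (by linarith)
    have h2 : Ψ (l / 2) / (l / 2) < Ψ l / l := hmono (by linarith) (by linarith)
    have h3 : 0 < Ψ l / l := by linarith
    have := mul_pos h3 hl
    rwa [div_mul_cancel₀ _ hl.ne'] at this
  -- D is an upper bound
  have hle_D : ∀ l : ℝ, 0 < l → Ψ l / l ≤ D := by
    intro l hl
    apply ge_of_tendsto htop
    filter_upwards [eventually_gt_atTop l] with y hy
    exact (hmono hl hy).le
  -- Ψ is monotone on (0, ∞)
  have hΨmono : ∀ x y : ℝ, 0 < x → x ≤ y → Ψ x ≤ Ψ y := by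
    intro x y hx hxy
    have hy : 0 < y := lt_of_lt_of_le hx hxy
    rcases eq_or_lt_of_le hxy with rfl | h
    · exact le_refl _
    have h1 : Ψ x / x < Ψ y / y := hmono hx h
    have h2 : 0 ≤ Ψ x / x := div_nonneg (hΨpos x hx).le hx.le
    have e1 : Ψ x = Ψ x / x * x := (div_mul_cancel₀ _ hx.ne').symm
    have e2 : Ψ y = Ψ y / y * y := (div_mul_cancel₀ _ hy.ne').symm
    rw [e1, e2]
    exact mul_le_mul h1.le hxy hx.le (le_trans h2 h1.le)
  -- interval integrability of (Ψ l)⁻¹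
  have hInt : ∀ p q : ℝ, 0 < p → 0 < q →
      IntervalIntegrable (fun l => (Ψ l)⁻¹) volume p q := by
    intro p q hp hq
    apply AntitoneOn.intervalIntegrable
    intro x hx y hy hxy
    rw [Set.uIcc_eq_union] at hx hy
    have hpq : 0 < min p q := lt_min hp hq
    have hx0 : 0 < x := by
      rcases hx with hx | hx
      · exact lt_of_lt_of_le hp hx.1
      · exact lt_of_lt_of_le hq hx.1
    exact inv_anti₀ (hΨpos x hx0) (hΨmono x y hx0 hxy)
  -- positivity of increments
  have hFnonneg : ∀ p q : ℝ, 0 < p → p ≤ q → 0 ≤ ∫ l in p..q, (Ψ l)⁻¹ := by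
    intro p q hp hpq
    apply intervalIntegral.integral_nonneg hpq
    intro u hu
    exact (inv_pos.2 (hΨpos u (lt_of_lt_of_le hp hu.1))).le
  have hFpos : ∀ p q : ℝ, 0 < p → p < q → 0 < ∫ l in p..q, (Ψ l)⁻¹ := by
    intro p q hp hpq
    have hq : 0 < q := hp.trans hpq
    have hlow : ∀ x ∈ Set.Icc p q, (Ψ q)⁻¹ ≤ (Ψ x)⁻¹ := by
      intro x hx
      exact inv_anti₀ (hΨpos x (lt_of_lt_of_le hp hx.1)) (hΨmono x q (lt_of_lt_of_le hp hx.1) hx.2)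
    have := intervalIntegral.integral_mono_on hpq.le
      (intervalIntegrable_const) (hInt p q hp hq) hlow
    rw [intervalIntegral.integral_const] at this
    have hpos : 0 < (q - p) • (Ψ q)⁻¹ := by
      rw [smul_eq_mul]
      exact mul_pos (by linarith) (inv_pos.2 (hΨpos q hq))
    linarith
  -- divergence of the backward flows
  have hdiv : ∀ (θ₀ : ℝ), 0 < θ₀ → ∀ (G : ℝ → ℝ), (∀ t : ℝ, 0 ≤ t → 0 < G t) →
      (∀ t : ℝ, 0 ≤ t → (∫ l in θ₀..(G t), (Ψ l)⁻¹) = t) → Tendsto G atTop atTop := by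
    intro θ₀ hθ₀ G hG hGeq
    rw [tendsto_atTop]
    intro M
    set M' := max M θ₀ with hM'def
    have hM' : 0 < M' := lt_of_lt_of_le hθ₀ (le_max_right _ _)
    filter_upwards [eventually_ge_atTop (max ((∫ l in θ₀..M', (Ψ l)⁻¹) + 1) 0)] with t ht
    have ht0 : 0 ≤ t := le_trans (le_max_right _ _) ht
    have htgt : (∫ l in θ₀..M', (Ψ l)⁻¹) < t :=
      lt_of_lt_of_le (lt_add_one _) (le_trans (le_max_left _ _) ht)
    by_contra hlt
    push_neg at hlt
    have hGM : G t ≤ M' := le_trans hlt.le (le_max_left _ _)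
    have hsplit : (∫ l in θ₀..(G t), (Ψ l)⁻¹) + (∫ l in (G t)..M', (Ψ l)⁻¹)
        = ∫ l in θ₀..M', (Ψ l)⁻¹ :=
      intervalIntegral.integral_add_adjacent_intervals
        (hInt θ₀ (G t) hθ₀ (hG t ht0)) (hInt (G t) M' (hG t ht0) hM')
    have hnn : 0 ≤ ∫ l in (G t)..M', (Ψ l)⁻¹ := hFnonneg (G t) M' (hG t ht0) hGM
    rw [hGeq t ht0] at hsplit
    linarith
  have htendg : Tendsto g atTop atTop := hdiv θ hθ g hg hgeq
  have htendg' : Tendsto g' atTop atTop := hdiv θ' hθ' g' hg' hg'eq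
  refine ⟨htendg, ?_⟩
  set S : ℝ := ∫ l in θ'..θ, (Ψ l)⁻¹ with hSdef
  -- key identity
  have hkey : ∀ t : ℝ, 0 ≤ t → (∫ l in (g' t)..(g t), (Ψ l)⁻¹) = S := by
    intro t ht
    have e1 : S + (∫ l in θ..(g t), (Ψ l)⁻¹) = ∫ l in θ'..(g t), (Ψ l)⁻¹ :=
      intervalIntegral.integral_add_adjacent_intervals
        (hInt θ' θ hθ' hθ) (hInt θ (g t) hθ (hg t ht))
    have e2 : (∫ l in θ'..(g' t), (Ψ l)⁻¹) + (∫ l in (g' t)..(g t), (Ψ l)⁻¹)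
        = ∫ l in θ'..(g t), (Ψ l)⁻¹ :=
      intervalIntegral.integral_add_adjacent_intervals
        (hInt θ' (g' t) hθ' (hg' t ht)) (hInt (g' t) (g t) (hg' t ht) (hg t ht))
    rw [hgeq t ht] at e1
    rw [hg'eq t ht] at e2
    linarith
  -- logarithm of the ratio
  have hlog : ∀ t : ℝ, 0 ≤ t →
      Real.log (g t / g' t) = ∫ l in (g' t)..(g t), l⁻¹ := by
    intro t ht
    rw [_root_.integral_inv (Set.notMem_uIcc_of_lt (hg' t ht) (hg t ht))]
  -- the quantitative bound
  have hbound : ∀ L : ℝ, 0 < L → ∀ t : ℝ, 0 ≤ t → L ≤ g t → L ≤ g' t →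
      |Real.log (g t / g' t) - D * S| ≤ (D - Ψ L / L) * |S| := by
    intro L hL t ht h1 h2
    set x := g' t
    set y := g t
    have hx : 0 < x := hg' t ht
    have hy : 0 < y := hg t ht
    have hDS : D * S = ∫ l in x..y, D * (Ψ l)⁻¹ := by
      rw [intervalIntegral.integral_const_mul, hkey t ht]
    have hintinv : IntervalIntegrable (fun l => l⁻¹) volume x y := by
      apply ContinuousOn.intervalIntegrable
      apply ContinuousOn.inv₀ (continuousOn_id)
      intro l hl
      rw [Set.uIcc_eq_union] at hl
      rcases hl with hl | hl
      · exact (lt_of_lt_of_le hx hl.1).ne'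
      · exact (lt_of_lt_of_le hy hl.1).ne'
    have hintf := hInt x y hx hy
    rw [hlog t ht, hDS, ← intervalIntegral.integral_sub hintinv (hintf.const_mul D)]
    have hmain := intervalIntegral.norm_integral_le_abs_of_norm_le
      (f := fun l => l⁻¹ - D * (Ψ l)⁻¹) (g := fun l => (D - Ψ L / L) * (Ψ l)⁻¹)
      (μ := volume) (a := x) (b := y) ?_ (hintf.const_mul _)
    · rw [Real.norm_eq_abs] at hmain
      apply le_trans hmain
      rw [intervalIntegral.integral_const_mul, hkey t ht, abs_mul]
      have hDL : 0 ≤ D - Ψ L / L := sub_nonneg.2 (hle_D L hL)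
      rw [abs_of_nonneg hDL]
    · rw [ae_restrict_iff' measurableSet_uIoc]
      filter_upwards with l hl
      have hlL : L < l := lt_of_le_of_lt (le_min h2 h1) hl.1
      have hl0 : 0 < l := hL.trans hlL
      have hΨl : 0 < Ψ l := hΨpos l hl0
      have e : l⁻¹ - D * (Ψ l)⁻¹ = (Ψ l / l - D) * (Ψ l)⁻¹ := by
        field_simp
      rw [Real.norm_eq_abs, e, abs_mul, abs_of_nonneg (inv_nonneg.2 hΨl.le)]
      apply mul_le_mul_of_nonneg_right _ (inv_nonneg.2 hΨl.le)
      rw [abs_of_nonpos (sub_nonpos.2 (hle_D l hl0))]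
      have := hmono hL hlL
      linarith
  -- limit of the logarithm of the ratio
  have hlogtend : Tendsto (fun t => Real.log (g t / g' t)) atTop (𝓝 (D * S)) := by
    rw [Metric.tendsto_nhds]
    intro ε hε
    have habs : 0 ≤ |S| := abs_nonneg S
    have hε' : 0 < ε / (|S| + 1) := by positivity
    obtain ⟨L, hL1, hL2⟩ := ((htop.eventually (eventually_gt_nhds
      (show D - ε / (|S| + 1) < D by linarith))).and (eventually_gt_atTop 0)).exists
    filter_upwards [htendg.eventually (eventually_ge_atTop L),
      htendg'.eventually (eventually_ge_atTop L), eventually_ge_atTop (0:ℝ)]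
      with t hgt hgt' ht0
    rw [Real.dist_eq]
    calc |Real.log (g t / g' t) - D * S| ≤ (D - Ψ L / L) * |S| :=
          hbound L hL2 t ht0 hgt hgt'
      _ ≤ ε / (|S| + 1) * |S| := mul_le_mul_of_nonneg_right (by linarith) habs
      _ < ε := by
          rw [div_mul_eq_mul_div, div_lt_iff₀ (by positivity)]
          nlinarith
  have hfinal := (Real.continuous_exp.tendsto (D * S)).comp hlogtend
  apply Tendsto.congr' _ hfinal
  filter_upwards [eventually_ge_atTop (0:ℝ)] with t ht
  simp only [Function.comp_apply]
  rw [Real.exp_log (div_pos (hg t ht) (hg' t ht))]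
end

section
/- Let Ψ be a non-linear branching mechanism of finite variation type with Ψ′(0+) := lim_{λ→0+} Ψ(λ)/λ ∈ [0,∞) (so Ψ > 0 on (0,∞) and D ∈ (0,∞)). Fix θ > 0 and let g_θ : [0,∞) → (0,∞) satisfy ∫_{θ}^{g_θ(t)} dλ/Ψ(λ) = t for all t ≥ 0. Then the limit d_θ := lim_{t→∞} e^{−Dt} g_θ(t) exists in [0,∞). Moreover d_θ > 0 if and only if ∫_{(0,1)} r·log(1/r) π(dr) < ∞, and in that case log d_θ = log θ − ∫_{θ}^{∞} ( D/Ψ(λ) − 1/λ ) dλ. -/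
open MeasureTheory Set Filter Topology
open scoped ENNReal NNReal

lemma lem_one_sub_exp_nonneg {x : ℝ} (hx : 0 ≤ x) : 0 ≤ 1 - Real.exp (-x) := by
  have : Real.exp (-x) ≤ 1 := Real.exp_le_one_iff.mpr (by linarith)
  linarith

lemma lem_one_sub_exp_le {x : ℝ} (hx : 0 ≤ x) : 1 - Real.exp (-x) ≤ min 1 x := by
  have h1 : Real.exp (-x) ≤ 1 := Real.exp_le_one_iff.mpr (by linarith)
  have h2 : 1 - x ≤ Real.exp (-x) := by
    have := Real.add_one_le_exp (-x); linarith
  have h3 : 0 < Real.exp (-x) := Real.exp_pos _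
  rcases le_total 1 x with h | h
  · simp [min_eq_left h]; linarith
  · rw [min_eq_right h]; linarith

lemma lem_min_le_two {x : ℝ} (hx : 0 ≤ x) : min 1 x ≤ 2 * (1 - Real.exp (-x)) := by
  have h3 : 0 < Real.exp (-x) := Real.exp_pos _
  have h4 : 0 < Real.exp x := Real.exp_pos _
  have h1 : Real.exp (-x) * (1 + x) ≤ 1 := by
    have := Real.add_one_le_exp x
    have := Real.exp_neg x
    calc Real.exp (-x) * (1 + x) ≤ Real.exp (-x) * Real.exp x := by nlinarith
    _ = 1 := by rw [← Real.exp_add]; simp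
  rcases le_total 1 x with h | h
  · rw [min_eq_left h]; nlinarith
  · rw [min_eq_right h]; nlinarith

lemma lem_concave_mul {s t : ℝ} (hs : 0 ≤ s) (hst : s ≤ t) :
    s * (1 - Real.exp (-t)) ≤ t * (1 - Real.exp (-s)) := by
  set d := t - s with hd
  have hd0 : 0 ≤ d := by linarith
  have hEs : 0 < Real.exp (-s) := Real.exp_pos _
  have hEd : 0 < Real.exp (-d) := Real.exp_pos _
  have h1 : 1 - Real.exp (-d) ≤ d := by have := Real.add_one_le_exp (-d); linarith
  have h2 : Real.exp (-s) * (1 + s) ≤ 1 := by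
    have h := Real.add_one_le_exp s
    calc Real.exp (-s) * (1 + s) ≤ Real.exp (-s) * Real.exp s := by nlinarith [Real.exp_pos s]
    _ = 1 := by rw [← Real.exp_add]; simp
  have ht : Real.exp (-t) = Real.exp (-s) * Real.exp (-d) := by
    rw [← Real.exp_add]; ring_nf
    rw [hd]; ring_nf
  have h5 : 0 ≤ 1 - Real.exp (-d) := lem_one_sub_exp_nonneg hd0
  have key : Real.exp (-s) * (s * (1 - Real.exp (-d)) + d) ≤ d := by
    have : s * (1 - Real.exp (-d)) + d ≤ s * d + d := by nlinarith
    calc Real.exp (-s) * (s * (1 - Real.exp (-d)) + d)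
        ≤ Real.exp (-s) * (s * d + d) := by nlinarith
      _ = Real.exp (-s) * (1 + s) * d := by ring
      _ ≤ 1 * d := by nlinarith
      _ = d := by ring
  have ht2 : t = s + d := by ring
  have ht' : Real.exp (-(s + d)) = Real.exp (-s) * Real.exp (-d) := by
    rw [← Real.exp_add]; ring_nf
  rw [ht2, ht']; nlinarith

lemma lem_concave_mul_strict {s t : ℝ} (hs : 0 < s) (hst : s < t) :
    s * (1 - Real.exp (-t)) < t * (1 - Real.exp (-s)) := by
  set d := t - s with hd
  have hd0 : 0 < d := by linarith
  have hEs : 0 < Real.exp (-s) := Real.exp_pos _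
  have hEd : 0 < Real.exp (-d) := Real.exp_pos _
  have h1 : 1 - Real.exp (-d) ≤ d := by have := Real.add_one_le_exp (-d); linarith
  have h2 : Real.exp (-s) * (1 + s) < 1 := by
    have h := Real.add_one_lt_exp (ne_of_gt hs)
    calc Real.exp (-s) * (1 + s) < Real.exp (-s) * Real.exp s := by nlinarith [Real.exp_pos s]
    _ = 1 := by rw [← Real.exp_add]; simp
  have ht : Real.exp (-t) = Real.exp (-s) * Real.exp (-d) := by
    rw [← Real.exp_add]; ring_nf
    rw [hd]; ring_nf
  have h5 : 0 ≤ 1 - Real.exp (-d) := lem_one_sub_exp_nonneg hd0.le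
  have key : Real.exp (-s) * (s * (1 - Real.exp (-d)) + d) < d := by
    have h6 : s * (1 - Real.exp (-d)) + d ≤ s * d + d := by nlinarith
    calc Real.exp (-s) * (s * (1 - Real.exp (-d)) + d)
        ≤ Real.exp (-s) * (s * d + d) := by nlinarith
      _ = Real.exp (-s) * (1 + s) * d := by ring
      _ < 1 * d := by nlinarith
      _ = d := by ring
  have ht2 : t = s + d := by ring
  have ht' : Real.exp (-(s + d)) = Real.exp (-s) * Real.exp (-d) := by
    rw [← Real.exp_add]; ring_nf
  rw [ht2, ht']; nlinarith

open MeasureTheory Set Filter Topology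
open scoped ENNReal NNReal

section MeasureFacts
variable {piM : Measure ℝ}

lemma lem_ae_pos (hπc : piM (Set.Ioi (0:ℝ))ᶜ = 0) : ∀ᵐ r ∂piM, 0 < r := by
  rw [ae_iff]
  have h : {r : ℝ | ¬ 0 < r} = (Set.Ioi (0:ℝ))ᶜ := by ext r; simp [not_lt]
  rw [h]; exact hπc

lemma lem_pi_Ici_lt_top (h2 : (∫⁻ r, ENNReal.ofReal (min 1 (r ^ 2)) ∂piM) < ⊤) :
    piM (Set.Ici (1:ℝ)) < ⊤ := by
  have h1 : piM (Set.Ici (1:ℝ)) = ∫⁻ _ in Set.Ici (1:ℝ), 1 ∂piM := by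
    rw [setLIntegral_const]; simp
  rw [h1]
  calc ∫⁻ _ in Set.Ici (1:ℝ), 1 ∂piM
      ≤ ∫⁻ r in Set.Ici (1:ℝ), ENNReal.ofReal (min 1 (r ^ 2)) ∂piM := by
        refine setLIntegral_mono (by fun_prop) (fun r hr => ?_)
        have : (1:ℝ) ≤ r ^ 2 := by nlinarith [mem_Ici.mp hr]
        rw [min_eq_left this]; simp
    _ ≤ ∫⁻ r, ENNReal.ofReal (min 1 (r ^ 2)) ∂piM := setLIntegral_le_lintegral _ _
    _ < ⊤ := h2

lemma lem_pi_Ioi_lt_top (h2 : (∫⁻ r, ENNReal.ofReal (min 1 (r ^ 2)) ∂piM) < ⊤)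
    (hfv : (∫⁻ r in Set.Ioo (0:ℝ) 1, ENNReal.ofReal r ∂piM) < ⊤)
    {ε : ℝ} (hε : 0 < ε) : piM (Set.Ioi ε) < ⊤ := by
  have hsub : Set.Ioi ε ⊆ Set.Ioo ε 1 ∪ Set.Ici 1 := by
    intro x hx
    rcases lt_or_ge x 1 with h | h
    · exact Or.inl ⟨hx, h⟩
    · exact Or.inr h
  have hIoo : piM (Set.Ioo ε 1) < ⊤ := by
    have key : ENNReal.ofReal ε * piM (Set.Ioo ε 1) ≤ ∫⁻ r in Set.Ioo (0:ℝ) 1, ENNReal.ofReal r ∂piM := by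
      calc ENNReal.ofReal ε * piM (Set.Ioo ε 1) = ∫⁻ _ in Set.Ioo ε 1, ENNReal.ofReal ε ∂piM := by
            rw [setLIntegral_const]
        _ ≤ ∫⁻ r in Set.Ioo ε 1, ENNReal.ofReal r ∂piM :=
            setLIntegral_mono (by fun_prop) (fun r hr => ENNReal.ofReal_le_ofReal hr.1.le)
        _ ≤ ∫⁻ r in Set.Ioo (0:ℝ) 1, ENNReal.ofReal r ∂piM := by
            apply lintegral_mono_set
            intro x hx; exact ⟨hε.trans hx.1, hx.2⟩
    have hne : ENNReal.ofReal ε ≠ 0 := by simp [hε, hε.not_ge]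
    by_contra h
    push_neg at h
    rw [top_le_iff.mp h, ENNReal.mul_top hne] at key
    exact (lt_irrefl ⊤ (key.trans_lt hfv)).elim
  calc piM (Set.Ioi ε) ≤ piM (Set.Ioo ε 1 ∪ Set.Ici 1) := measure_mono hsub
    _ ≤ piM (Set.Ioo ε 1) + piM (Set.Ici 1) := measure_union_le _ _
    _ < ⊤ := ENNReal.add_lt_top.mpr ⟨hIoo, lem_pi_Ici_lt_top h2⟩

lemma lem_sigmaFinite (hπc : piM (Set.Ioi (0:ℝ))ᶜ = 0)
    (h2 : (∫⁻ r, ENNReal.ofReal (min 1 (r ^ 2)) ∂piM) < ⊤)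
    (hfv : (∫⁻ r in Set.Ioo (0:ℝ) 1, ENNReal.ofReal r ∂piM) < ⊤) :
    SigmaFinite piM := by
  refine ⟨⟨⟨fun n => Set.Iic 0 ∪ Set.Ioi (1/(n+1) : ℝ), fun _ => trivial, fun n => ?_, ?_⟩⟩⟩
  · have h0 : piM (Set.Iic (0:ℝ)) = 0 := by
      rw [← compl_Ioi]; exact hπc
    calc piM (Set.Iic 0 ∪ Set.Ioi (1/(n+1) : ℝ))
        ≤ piM (Set.Iic 0) + piM (Set.Ioi (1/(n+1) : ℝ)) := measure_union_le _ _
      _ < ⊤ := by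
          rw [h0, zero_add]
          exact lem_pi_Ioi_lt_top h2 hfv (by positivity)
  · ext x
    simp only [Set.mem_iUnion, Set.mem_union, Set.mem_Iic, Set.mem_Ioi, Set.mem_univ, iff_true]
    rcases le_or_gt x 0 with h | h
    · exact ⟨0, Or.inl h⟩
    · obtain ⟨n, hn⟩ := exists_nat_one_div_lt h
      exact ⟨n, Or.inr hn⟩

lemma lem_min_int (hπc : piM (Set.Ioi (0:ℝ))ᶜ = 0)
    (h2 : (∫⁻ r, ENNReal.ofReal (min 1 (r ^ 2)) ∂piM) < ⊤)
    (hfv : (∫⁻ r in Set.Ioo (0:ℝ) 1, ENNReal.ofReal r ∂piM) < ⊤) :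
    (∫⁻ r, ENNReal.ofReal (min 1 r) ∂piM) < ⊤ := by
  have hae : ∀ᵐ r ∂piM, ENNReal.ofReal (min 1 r) ≤
      (Set.Ioo (0:ℝ) 1).indicator (fun r => ENNReal.ofReal r) r
      + (Set.Ici (1:ℝ)).indicator (fun _ => 1) r := by
    filter_upwards [lem_ae_pos hπc] with r hr
    simp only [Set.indicator_apply, Set.mem_Ioo, Set.mem_Ici]
    rcases lt_or_ge r 1 with h | h
    · rw [if_pos ⟨hr, h⟩, if_neg (by linarith), min_eq_right h.le]
      simp
    · rw [if_neg (fun hh => absurd hh.2 (not_lt.mpr h)), if_pos h, min_eq_left h]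
      simp
  calc (∫⁻ r, ENNReal.ofReal (min 1 r) ∂piM)
      ≤ ∫⁻ r, ((Set.Ioo (0:ℝ) 1).indicator (fun r => ENNReal.ofReal r) r
        + (Set.Ici (1:ℝ)).indicator (fun _ => 1) r) ∂piM := lintegral_mono_ae hae
    _ = (∫⁻ r in Set.Ioo (0:ℝ) 1, ENNReal.ofReal r ∂piM) + piM (Set.Ici 1) := by
        rw [lintegral_add_left (ENNReal.measurable_ofReal.indicator measurableSet_Ioo), lintegral_indicator measurableSet_Ioo,
          lintegral_indicator measurableSet_Ici, setLIntegral_const, one_mul]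
    _ < ⊤ := ENNReal.add_lt_top.mpr ⟨hfv, lem_pi_Ici_lt_top h2⟩

end MeasureFacts

section PhiSec
open MeasureTheory Set Filter Topology Real
open scoped ENNReal NNReal

noncomputable def PhiR (piM : Measure ℝ) (l : ℝ) : ℝ :=
  ∫ r, (1 - Real.exp (-l * r)) ∂piM

variable {piM : Measure ℝ}

lemma lem_min_mul {l r : ℝ} (hl : 0 ≤ l) (hr : 0 ≤ r) :
    min 1 (l * r) ≤ max 1 l * min 1 r := by
  rcases le_total r 1 with h' | h'
  · rw [min_eq_right h']
    calc min 1 (l * r) ≤ l * r := min_le_right _ _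
      _ ≤ max 1 l * r := by nlinarith [le_max_right (1:ℝ) l]
  · rw [min_eq_left h']
    calc min 1 (l * r) ≤ 1 := min_le_left _ _
      _ = 1 * 1 := by ring
      _ ≤ max 1 l * 1 := by nlinarith [le_max_left (1:ℝ) l]

lemma lem_ofReal_exp_bound (hπc : piM (Set.Ioi (0:ℝ))ᶜ = 0) {l : ℝ} (hl : 0 ≤ l) :
    ∀ᵐ r ∂piM, ENNReal.ofReal (1 - Real.exp (-l * r)) ≤
      ENNReal.ofReal (max 1 l) * ENNReal.ofReal (min 1 r) := by
  filter_upwards [lem_ae_pos hπc] with r hr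
  rw [← ENNReal.ofReal_mul (by positivity)]
  apply ENNReal.ofReal_le_ofReal
  calc 1 - Real.exp (-l * r) ≤ min 1 (l * r) := by
        rw [neg_mul]; exact lem_one_sub_exp_le (by positivity)
    _ ≤ max 1 l * min 1 r := lem_min_mul hl hr.le

lemma lem_Phi_lt_top (hπc : piM (Set.Ioi (0:ℝ))ᶜ = 0)
    (h2 : (∫⁻ r, ENNReal.ofReal (min 1 (r ^ 2)) ∂piM) < ⊤)
    (hfv : (∫⁻ r in Set.Ioo (0:ℝ) 1, ENNReal.ofReal r ∂piM) < ⊤)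
    {l : ℝ} (hl : 0 ≤ l) :
    (∫⁻ r, ENNReal.ofReal (1 - Real.exp (-l * r)) ∂piM) < ⊤ := by
  calc (∫⁻ r, ENNReal.ofReal (1 - Real.exp (-l * r)) ∂piM)
      ≤ ∫⁻ r, ENNReal.ofReal (max 1 l) * ENNReal.ofReal (min 1 r) ∂piM :=
        lintegral_mono_ae (lem_ofReal_exp_bound hπc hl)
    _ = ENNReal.ofReal (max 1 l) * ∫⁻ r, ENNReal.ofReal (min 1 r) ∂piM :=
        lintegral_const_mul' _ _ ENNReal.ofReal_ne_top
    _ < ⊤ := ENNReal.mul_lt_top ENNReal.ofReal_lt_top (lem_min_int hπc h2 hfv)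

lemma lem_one_sub_exp_nonneg_ae (hπc : piM (Set.Ioi (0:ℝ))ᶜ = 0) {l : ℝ} (hl : 0 ≤ l) :
    0 ≤ᵐ[piM] fun r => 1 - Real.exp (-l * r) := by
  filter_upwards [lem_ae_pos hπc] with r hr
  rw [neg_mul]; exact lem_one_sub_exp_nonneg (by positivity)

lemma lem_Phi_integrable (hπc : piM (Set.Ioi (0:ℝ))ᶜ = 0)
    (h2 : (∫⁻ r, ENNReal.ofReal (min 1 (r ^ 2)) ∂piM) < ⊤)
    (hfv : (∫⁻ r in Set.Ioo (0:ℝ) 1, ENNReal.ofReal r ∂piM) < ⊤)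
    {l : ℝ} (hl : 0 ≤ l) :
    Integrable (fun r => 1 - Real.exp (-l * r)) piM := by
  refine ⟨(Continuous.aestronglyMeasurable (by fun_prop)), ?_⟩
  rw [hasFiniteIntegral_iff_ofReal (lem_one_sub_exp_nonneg_ae hπc hl)]
  exact lem_Phi_lt_top hπc h2 hfv hl

lemma lem_PhiR_nonneg (hπc : piM (Set.Ioi (0:ℝ))ᶜ = 0) {l : ℝ} (hl : 0 ≤ l) :
    0 ≤ PhiR piM l :=
  integral_nonneg_of_ae (lem_one_sub_exp_nonneg_ae hπc hl)

lemma lem_PhiR_ofReal (hπc : piM (Set.Ioi (0:ℝ))ᶜ = 0)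
    (h2 : (∫⁻ r, ENNReal.ofReal (min 1 (r ^ 2)) ∂piM) < ⊤)
    (hfv : (∫⁻ r in Set.Ioo (0:ℝ) 1, ENNReal.ofReal r ∂piM) < ⊤)
    {l : ℝ} (hl : 0 ≤ l) :
    ENNReal.ofReal (PhiR piM l) = ∫⁻ r, ENNReal.ofReal (1 - Real.exp (-l * r)) ∂piM :=
  MeasureTheory.ofReal_integral_eq_lintegral_ofReal
    (lem_Phi_integrable hπc h2 hfv hl) (lem_one_sub_exp_nonneg_ae hπc hl)

lemma lem_indicator_integrable
    (hfv : (∫⁻ r in Set.Ioo (0:ℝ) 1, ENNReal.ofReal r ∂piM) < ⊤)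
    {l : ℝ} (hl : 0 ≤ l) :
    Integrable ((Set.Ioo (0:ℝ) 1).indicator (fun r => l * r)) piM := by
  rw [integrable_indicator_iff measurableSet_Ioo]
  refine ⟨(Continuous.aestronglyMeasurable (by fun_prop)).restrict, ?_⟩
  have hnn : 0 ≤ᵐ[piM.restrict (Set.Ioo (0:ℝ) 1)] fun r => l * r := by
    filter_upwards [ae_restrict_mem measurableSet_Ioo] with r hr
    exact mul_nonneg hl hr.1.le
  rw [hasFiniteIntegral_iff_ofReal hnn]
  calc (∫⁻ r in Set.Ioo (0:ℝ) 1, ENNReal.ofReal (l * r) ∂piM)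
      = ∫⁻ r in Set.Ioo (0:ℝ) 1, ENNReal.ofReal l * ENNReal.ofReal r ∂piM := by
        apply lintegral_congr; intro r; rw [ENNReal.ofReal_mul hl]
    _ = ENNReal.ofReal l * ∫⁻ r in Set.Ioo (0:ℝ) 1, ENNReal.ofReal r ∂piM :=
        lintegral_const_mul' _ _ ENNReal.ofReal_ne_top
    _ < ⊤ := ENNReal.mul_lt_top ENNReal.ofReal_lt_top hfv

lemma lem_psi_eq {Ψ : ℝ → ℝ} {a b : ℝ}
    (hbm : IsBranchingMechanism Ψ a b piM) (hb0 : b = 0)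
    (hfv : (∫⁻ r in Set.Ioo (0:ℝ) 1, ENNReal.ofReal r ∂piM) < ⊤)
    {l : ℝ} (hl : 0 ≤ l) :
    Ψ l = Dconst a piM * l - PhiR piM l := by
  obtain ⟨hb, hπc, h2, hshape⟩ := hbm
  have h1 : (∫ r, (Real.exp (-l * r) - 1 + (if r < 1 then l * r else 0)) ∂piM)
      = ∫ r, ((Set.Ioo (0:ℝ) 1).indicator (fun r => l * r) r - (1 - Real.exp (-l * r))) ∂piM := by
    apply integral_congr_ae
    filter_upwards [lem_ae_pos hπc] with r hr
    simp only [Set.indicator_apply, Set.mem_Ioo]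
    rcases lt_or_ge r 1 with h | h
    · rw [if_pos h, if_pos ⟨hr, h⟩]; ring
    · rw [if_neg (not_lt.mpr h), if_neg (fun hh => absurd hh.2 (not_lt.mpr h))]; ring
  have h2' : (∫ r, ((Set.Ioo (0:ℝ) 1).indicator (fun r => l * r) r - (1 - Real.exp (-l * r))) ∂piM)
      = (∫ r, (Set.Ioo (0:ℝ) 1).indicator (fun r => l * r) r ∂piM) - PhiR piM l :=
    integral_sub (lem_indicator_integrable hfv hl) (lem_Phi_integrable hπc h2 hfv hl)
  have h3 : (∫ r, (Set.Ioo (0:ℝ) 1).indicator (fun r => l * r) r ∂piM)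
      = l * ∫ r in Set.Ioo (0:ℝ) 1, r ∂piM := by
    rw [integral_indicator measurableSet_Ioo, integral_const_mul]
  rw [hshape l hl]
  unfold psiShape
  rw [h1, h2', h3, hb0, Dconst]
  ring

lemma lem_slope_mono (hπc : piM (Set.Ioi (0:ℝ))ᶜ = 0)
    (h2 : (∫⁻ r, ENNReal.ofReal (min 1 (r ^ 2)) ∂piM) < ⊤)
    (hfv : (∫⁻ r in Set.Ioo (0:ℝ) 1, ENNReal.ofReal r ∂piM) < ⊤)
    {m l : ℝ} (hm : 0 < m) (hml : m ≤ l) :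
    m * PhiR piM l ≤ l * PhiR piM m := by
  unfold PhiR
  rw [← integral_const_mul, ← integral_const_mul]
  refine integral_mono_ae ((lem_Phi_integrable hπc h2 hfv (by linarith)).const_mul m)
    ((lem_Phi_integrable hπc h2 hfv hm.le).const_mul l) ?_
  filter_upwards [lem_ae_pos hπc] with r hr
  have key := lem_concave_mul (s := m * r) (t := l * r)
    (by positivity) (by nlinarith)
  have h1 : -(m * r) = -m * r := by ring
  have h2 : -(l * r) = -l * r := by ring
  rw [h1, h2] at key
  nlinarith [key, hr]

lemma lem_slope_strict (hπc : piM (Set.Ioi (0:ℝ))ᶜ = 0)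
    (h2 : (∫⁻ r, ENNReal.ofReal (min 1 (r ^ 2)) ∂piM) < ⊤)
    (hfv : (∫⁻ r in Set.Ioo (0:ℝ) 1, ENNReal.ofReal r ∂piM) < ⊤)
    (hne : piM ≠ 0)
    {m l : ℝ} (hm : 0 < m) (hml : m < l) :
    m * PhiR piM l < l * PhiR piM m := by
  set diff : ℝ → ℝ := fun r => l * (1 - Real.exp (-m * r)) - m * (1 - Real.exp (-l * r)) with hdiff
  have hposd : ∀ r : ℝ, 0 < r → 0 < diff r := by
    intro r hr
    have key := lem_concave_mul_strict (s := m * r) (t := l * r)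
      (by positivity) (by nlinarith)
    have h1 : -(m * r) = -m * r := by ring
    have h2 : -(l * r) = -l * r := by ring
    rw [h1, h2] at key
    simp only [hdiff]
    nlinarith [key, hr]
  have hnn : 0 ≤ᵐ[piM] diff := by
    filter_upwards [lem_ae_pos hπc] with r hr
    exact (hposd r hr).le
  have hint : Integrable diff piM :=
    ((lem_Phi_integrable hπc h2 hfv hm.le).const_mul l).sub
      ((lem_Phi_integrable hπc h2 hfv (by linarith : (0:ℝ) ≤ l)).const_mul m)
  have hIoi : 0 < piM (Set.Ioi (0:ℝ)) := by
    have huniv : piM Set.univ ≠ 0 := by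
      intro h
      exact hne (MeasureTheory.Measure.measure_univ_eq_zero.mp h)
    have : piM Set.univ ≤ piM (Set.Ioi (0:ℝ)) + piM (Set.Ioi (0:ℝ))ᶜ := by
      rw [← Set.union_compl_self (Set.Ioi (0:ℝ))]
      exact measure_union_le _ _
    rw [hπc, add_zero] at this
    exact lt_of_lt_of_le (pos_iff_ne_zero.mpr huniv) this
  have hsupp : Set.Ioi (0:ℝ) ⊆ Function.support diff := fun r hr => (hposd r hr).ne'
  have hpos : 0 < ∫ r, diff r ∂piM := by
    rw [integral_pos_iff_support_of_nonneg_ae hnn hint]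
    exact lt_of_lt_of_le hIoi (measure_mono hsupp)
  have heq : (∫ r, diff r ∂piM) = l * PhiR piM m - m * PhiR piM l := by
    simp only [hdiff]
    rw [integral_sub ((lem_Phi_integrable hπc h2 hfv hm.le).const_mul l)
      ((lem_Phi_integrable hπc h2 hfv (by linarith : (0:ℝ) ≤ l)).const_mul m),
      integral_const_mul, integral_const_mul]
    rfl
  linarith [heq ▸ hpos]

end PhiSec

section PsiSec
open MeasureTheory Set Filter Topology Real
open scoped ENNReal NNReal

variable {Ψ : ℝ → ℝ} {a b : ℝ} {piM : Measure ℝ}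

lemma lem_psi_slope (hbm : IsBranchingMechanism Ψ a b piM)
    (hfv : FiniteVariationType b piM)
    {m l : ℝ} (hm : 0 < m) (hml : m ≤ l) :
    Ψ m * l ≤ Ψ l * m := by
  have h1 := lem_psi_eq hbm hfv.1 hfv.2 (le_of_lt hm)
  have h2 := lem_psi_eq hbm hfv.1 hfv.2 (le_of_lt (lt_of_lt_of_le hm hml))
  have h3 := lem_slope_mono hbm.2.1 hbm.2.2.1 hfv.2 hm hml
  rw [h1, h2]; nlinarith

lemma lem_psi_lb (hbm : IsBranchingMechanism Ψ a b piM)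
    (hfv : FiniteVariationType b piM)
    {c : ℝ} (hder : Tendsto (fun l => Ψ l / l) (𝓝[>] 0) (𝓝 c))
    {l : ℝ} (hl : 0 < l) : c * l ≤ Ψ l := by
  have key : c ≤ Ψ l / l := by
    refine le_of_tendsto hder ?_
    filter_upwards [Ioc_mem_nhdsGT hl] with m hm
    rw [div_le_div_iff₀ hm.1 hl]
    exact lem_psi_slope hbm hfv hm.1 hm.2
  calc c * l ≤ (Ψ l / l) * l := by nlinarith
    _ = Ψ l := by field_simp

lemma lem_psi_pos (hbm : IsBranchingMechanism Ψ a b piM) (hnl : IsNonLinear b piM)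
    (hfv : FiniteVariationType b piM)
    {c : ℝ} (hc : 0 ≤ c) (hder : Tendsto (fun l => Ψ l / l) (𝓝[>] 0) (𝓝 c))
    {l : ℝ} (hl : 0 < l) : 0 < Ψ l := by
  have hne : piM ≠ 0 := by
    rcases hnl with h | h
    · rw [hfv.1] at h; exact absurd h (lt_irrefl 0)
    · exact h
  have hm : (0:ℝ) < l / 2 := by linarith
  have hs := lem_slope_strict hbm.2.1 hbm.2.2.1 hfv.2 hne hm (by linarith : l / 2 < l)
  have h1 := lem_psi_eq hbm hfv.1 hfv.2 hm.le
  have h2 := lem_psi_eq hbm hfv.1 hfv.2 (by linarith : (0:ℝ) ≤ l)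
  have hlb := lem_psi_lb hbm hfv hder hm
  have key : l * Ψ (l / 2) < Ψ l * (l / 2) := by rw [h1, h2]; nlinarith [hs]
  have h4 : 0 ≤ Ψ (l / 2) := le_trans (by positivity) hlb
  have h5 : 0 ≤ l * Ψ (l / 2) := mul_nonneg hl.le h4
  nlinarith

lemma lem_psi_ub (hbm : IsBranchingMechanism Ψ a b piM)
    (hfv : FiniteVariationType b piM)
    {l : ℝ} (hl : 0 ≤ l) : Ψ l ≤ Dconst a piM * l := by
  have h1 := lem_psi_eq hbm hfv.1 hfv.2 hl
  have h2 := lem_PhiR_nonneg hbm.2.1 hl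
  linarith

lemma lem_D_pos (hbm : IsBranchingMechanism Ψ a b piM) (hnl : IsNonLinear b piM)
    (hfv : FiniteVariationType b piM)
    {c : ℝ} (hc : 0 ≤ c) (hder : Tendsto (fun l => Ψ l / l) (𝓝[>] 0) (𝓝 c)) :
    0 < Dconst a piM := by
  have h1 := lem_psi_eq hbm hfv.1 hfv.2 (by norm_num : (0:ℝ) ≤ 1)
  have h2 := lem_PhiR_nonneg hbm.2.1 (by norm_num : (0:ℝ) ≤ 1)
  have h3 := lem_psi_pos hbm hnl hfv hc hder (by norm_num : (0:ℝ) < 1)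
  nlinarith

lemma lem_PhiR_continuousAt (hπc : piM (Set.Ioi (0:ℝ))ᶜ = 0)
    (h2 : (∫⁻ r, ENNReal.ofReal (min 1 (r ^ 2)) ∂piM) < ⊤)
    (hfv : (∫⁻ r in Set.Ioo (0:ℝ) 1, ENNReal.ofReal r ∂piM) < ⊤)
    {l₀ : ℝ} (hl₀ : 0 < l₀) : ContinuousAt (PhiR piM) l₀ := by
  apply continuousAt_of_dominated (bound := fun r => min 1 ((l₀ + 1) * r))
  · exact Eventually.of_forall (fun l => Continuous.aestronglyMeasurable (by fun_prop))
  · filter_upwards [isOpen_Ioo.mem_nhds (⟨hl₀, by linarith⟩ : l₀ ∈ Set.Ioo 0 (l₀+1))] with l hl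
    filter_upwards [lem_ae_pos hπc] with r hr
    rw [Real.norm_eq_abs, abs_of_nonneg (by
      rw [neg_mul]; exact lem_one_sub_exp_nonneg (mul_pos hl.1 hr).le)]
    calc 1 - Real.exp (-l * r) ≤ min 1 (l * r) := by
          rw [neg_mul]; exact lem_one_sub_exp_le (mul_pos hl.1 hr).le
      _ ≤ min 1 ((l₀ + 1) * r) := by
          apply min_le_min le_rfl
          nlinarith [hl.2, hr]
  · refine ⟨(Continuous.aestronglyMeasurable (by fun_prop)), ?_⟩
    have hnn : 0 ≤ᵐ[piM] fun r => min 1 ((l₀ + 1) * r) := by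
      filter_upwards [lem_ae_pos hπc] with r hr
      positivity
    rw [hasFiniteIntegral_iff_ofReal hnn]
    calc (∫⁻ r, ENNReal.ofReal (min 1 ((l₀ + 1) * r)) ∂piM)
        ≤ ∫⁻ r, ENNReal.ofReal (max 1 (l₀ + 1)) * ENNReal.ofReal (min 1 r) ∂piM := by
          apply lintegral_mono_ae
          filter_upwards [lem_ae_pos hπc] with r hr
          rw [← ENNReal.ofReal_mul (by positivity)]
          exact ENNReal.ofReal_le_ofReal (lem_min_mul (by linarith) hr.le)
      _ = ENNReal.ofReal (max 1 (l₀ + 1)) * ∫⁻ r, ENNReal.ofReal (min 1 r) ∂piM :=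
          lintegral_const_mul' _ _ ENNReal.ofReal_ne_top
      _ < ⊤ := ENNReal.mul_lt_top ENNReal.ofReal_lt_top (lem_min_int hπc h2 hfv)
  · exact Eventually.of_forall (fun r => (by fun_prop : Continuous (fun l : ℝ => 1 - Real.exp (-l * r))).continuousAt)

lemma lem_psi_contOn (hbm : IsBranchingMechanism Ψ a b piM)
    (hfv : FiniteVariationType b piM) :
    ContinuousOn Ψ (Set.Ioi (0:ℝ)) := by
  have h1 : ContinuousOn (fun l => Dconst a piM * l - PhiR piM l) (Set.Ioi (0:ℝ)) := by
    intro l hl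
    exact ((((continuous_const.mul continuous_id).continuousAt).sub
      (lem_PhiR_continuousAt hbm.2.1 hbm.2.2.1 hfv.2 hl)).continuousWithinAt)
  exact h1.congr (fun l hl => lem_psi_eq hbm hfv.1 hfv.2 (le_of_lt hl))

end PsiSec

section IntComp
open MeasureTheory Set Filter Topology Real intervalIntegral
open scoped ENNReal NNReal

lemma lem_rpow_inv_sq {x : ℝ} (hx : 0 < x) : x ^ (-2 : ℝ) = (x ^ 2)⁻¹ := by
  rw [Real.rpow_neg hx.le, ← Real.rpow_natCast x 2]
  norm_num

lemma lem_inv_sq_integrable {θ : ℝ} (hθ : 0 < θ) :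
    IntegrableOn (fun l : ℝ => (l ^ 2)⁻¹) (Set.Ioi θ) volume := by
  have h := integrableOn_Ioi_rpow_of_lt (by norm_num : (-2:ℝ) < -1) hθ
  apply h.congr_fun ?_ measurableSet_Ioi
  intro x hx
  exact lem_rpow_inv_sq (lt_trans hθ hx)

lemma lem_Ioi_inv_sq_integral {B : ℝ} (hB : 0 < B) :
    ∫ l in Set.Ioi B, (l ^ 2)⁻¹ = B⁻¹ := by
  have h := integral_Ioi_rpow_of_lt (by norm_num : (-2:ℝ) < -1) hB
  have h2 : ∫ l in Set.Ioi B, (l ^ 2)⁻¹ = ∫ l in Set.Ioi B, l ^ (-2:ℝ) := by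
    apply setIntegral_congr_fun measurableSet_Ioi
    intro x hx
    exact (lem_rpow_inv_sq (lt_trans hB hx)).symm
  rw [h2, h, show (-2:ℝ) + 1 = -1 by norm_num]
  rw [Real.rpow_neg hB.le, Real.rpow_one]
  field_simp

lemma lem_Ioc_inv_integral {θ B : ℝ} (hθ : 0 < θ) (hB : θ ≤ B) :
    ∫ l in Set.Ioc θ B, l⁻¹ = Real.log B - Real.log θ := by
  rw [← intervalIntegral.integral_of_le hB, integral_inv
    (Set.notMem_uIcc_of_lt hθ (lt_of_lt_of_le hθ hB)),
    Real.log_div (lt_of_lt_of_le hθ hB).ne' hθ.ne']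

section KSec
open MeasureTheory Set Filter Topology Real
open scoped ENNReal NNReal

lemma lem_lint_Ioc_inv {θ B c : ℝ} (hθ : 0 < θ) (hB : θ ≤ B) (hc : 0 ≤ c) :
    (∫⁻ l in Set.Ioc θ B, ENNReal.ofReal (c * l⁻¹)) =
      ENNReal.ofReal (c * (Real.log B - Real.log θ)) := by
  have hIocInt : IntegrableOn (fun l : ℝ => c * l⁻¹) (Set.Ioc θ B) volume := by
    apply Integrable.const_mul
    refine ((continuousOn_inv₀.mono (fun u hu => ?_)).integrableOn_compact isCompact_Icc).mono_set
      Set.Ioc_subset_Icc_self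
    exact ne_of_gt (lt_of_lt_of_le hθ (Set.mem_Icc.mp hu).1)
  have hnn : 0 ≤ᵐ[volume.restrict (Set.Ioc θ B)] fun l : ℝ => c * l⁻¹ := by
    filter_upwards [ae_restrict_mem measurableSet_Ioc] with l hl
    have : 0 < l := lt_of_lt_of_le hθ hl.1.le
    positivity
  rw [← MeasureTheory.ofReal_integral_eq_lintegral_ofReal hIocInt hnn,
    MeasureTheory.integral_const_mul, lem_Ioc_inv_integral hθ hB]

lemma lem_K_const {θ : ℝ} (hθ : 0 < θ) (r : ℝ) :
    (∫⁻ l in Set.Ioi θ, ENNReal.ofReal (1 - Real.exp (-l * r)) * ENNReal.ofReal ((l^2)⁻¹))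
      ≤ ∫⁻ l in Set.Ioi θ, ENNReal.ofReal ((l^2)⁻¹) := by
  apply lintegral_mono
  intro l
  calc ENNReal.ofReal (1 - Real.exp (-l * r)) * ENNReal.ofReal ((l^2)⁻¹)
      ≤ 1 * ENNReal.ofReal ((l^2)⁻¹) := by
        apply mul_le_mul_left
        rw [show (1:ℝ≥0∞) = ENNReal.ofReal 1 by simp]
        exact ENNReal.ofReal_le_ofReal (by nlinarith [Real.exp_pos (-l * r)])
    _ = ENNReal.ofReal ((l^2)⁻¹) := one_mul _

lemma lem_Kc_lt_top {θ : ℝ} (hθ : 0 < θ) :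
    (∫⁻ l in Set.Ioi θ, ENNReal.ofReal ((l^2)⁻¹)) < ⊤ := by
  have hnn : 0 ≤ᵐ[volume.restrict (Set.Ioi θ)] fun l : ℝ => (l^2)⁻¹ :=
    Filter.Eventually.of_forall (fun l => by positivity)
  rw [← MeasureTheory.ofReal_integral_eq_lintegral_ofReal (lem_inv_sq_integrable hθ) hnn]
  exact ENNReal.ofReal_lt_top

lemma lem_K_upper {θ r : ℝ} (hθ : 0 < θ) (hr : 0 < r) (hBθ : θ < r⁻¹) :
    (∫⁻ l in Set.Ioi θ, ENNReal.ofReal (1 - Real.exp (-l * r)) * ENNReal.ofReal ((l^2)⁻¹))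
      ≤ ENNReal.ofReal (r * (Real.log (1/r) - Real.log θ)) + ENNReal.ofReal r := by
  have hsplit : (Set.Ioc θ r⁻¹ ∪ Set.Ioi r⁻¹) = Set.Ioi θ := Set.Ioc_union_Ioi_eq_Ioi hBθ.le
  rw [← hsplit, lintegral_union measurableSet_Ioi (Set.Ioc_disjoint_Ioi le_rfl)]
  apply add_le_add
  · -- on Ioc θ r⁻¹
    calc (∫⁻ l in Set.Ioc θ r⁻¹, ENNReal.ofReal (1 - Real.exp (-l * r)) * ENNReal.ofReal ((l^2)⁻¹))
        ≤ ∫⁻ l in Set.Ioc θ r⁻¹, ENNReal.ofReal (r * l⁻¹) := by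
          apply setLIntegral_mono (by fun_prop) ?_
          intro l hl
          have hlp : 0 < l := lt_of_lt_of_le hθ hl.1.le
          have hnn1 : (0:ℝ) ≤ 1 - Real.exp (-l * r) := by
            rw [neg_mul]; exact lem_one_sub_exp_nonneg (by positivity)
          rw [← ENNReal.ofReal_mul hnn1]
          apply ENNReal.ofReal_le_ofReal
          have h1 : 1 - Real.exp (-l * r) ≤ l * r := by
            rw [neg_mul]
            exact le_trans (lem_one_sub_exp_le (by positivity)) (min_le_right _ _)
          have h2 : (l^2)⁻¹ ≤ (l^2)⁻¹ := le_rfl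
          have h3 : 0 ≤ (l^2)⁻¹ := by positivity
          calc (1 - Real.exp (-l * r)) * (l^2)⁻¹ ≤ (l * r) * (l^2)⁻¹ := by
                apply mul_le_mul_of_nonneg_right h1 h3
            _ = r * l⁻¹ := by field_simp
      _ = ENNReal.ofReal (r * (Real.log (1/r) - Real.log θ)) := by
          rw [lem_lint_Ioc_inv hθ hBθ.le hr.le, one_div]
  · -- on Ioi r⁻¹
    have hBpos : 0 < r⁻¹ := by positivity
    calc (∫⁻ l in Set.Ioi r⁻¹, ENNReal.ofReal (1 - Real.exp (-l * r)) * ENNReal.ofReal ((l^2)⁻¹))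
        ≤ ∫⁻ l in Set.Ioi r⁻¹, ENNReal.ofReal ((l^2)⁻¹) := lem_K_const hBpos r
      _ = ENNReal.ofReal r := by
          have hnn : 0 ≤ᵐ[volume.restrict (Set.Ioi r⁻¹)] fun l : ℝ => (l^2)⁻¹ :=
            Filter.Eventually.of_forall (fun l => by positivity)
          rw [← MeasureTheory.ofReal_integral_eq_lintegral_ofReal
            (lem_inv_sq_integrable hBpos) hnn, lem_Ioi_inv_sq_integral hBpos, inv_inv]

lemma lem_K_lower {θ r : ℝ} (hθ : 0 < θ) (hr : 0 < r) (hBθ : θ < r⁻¹) :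
    ENNReal.ofReal ((r/2) * (Real.log (1/r) - Real.log θ))
      ≤ ∫⁻ l in Set.Ioi θ, ENNReal.ofReal (1 - Real.exp (-l * r)) * ENNReal.ofReal ((l^2)⁻¹) := by
  have hmono : (∫⁻ l in Set.Ioc θ r⁻¹, ENNReal.ofReal (1 - Real.exp (-l * r)) * ENNReal.ofReal ((l^2)⁻¹))
      ≤ ∫⁻ l in Set.Ioi θ, ENNReal.ofReal (1 - Real.exp (-l * r)) * ENNReal.ofReal ((l^2)⁻¹) :=
    lintegral_mono_set (fun x hx => hx.1)
  refine le_trans ?_ hmono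
  have key : (∫⁻ l in Set.Ioc θ r⁻¹, ENNReal.ofReal ((r/2) * l⁻¹))
      ≤ ∫⁻ l in Set.Ioc θ r⁻¹, ENNReal.ofReal (1 - Real.exp (-l * r)) * ENNReal.ofReal ((l^2)⁻¹) := by
    apply lintegral_mono_ae
    filter_upwards [ae_restrict_mem measurableSet_Ioc] with l hl
    have hlp : 0 < l := lt_of_lt_of_le hθ hl.1.le
    have hlr1 : l * r ≤ 1 := by
      have := hl.2
      calc l * r ≤ r⁻¹ * r := by nlinarith
        _ = 1 := inv_mul_cancel₀ hr.ne'
    have hnn1 : 0 ≤ 1 - Real.exp (-l * r) := by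
      rw [neg_mul]; exact lem_one_sub_exp_nonneg (by positivity)
    rw [← ENNReal.ofReal_mul hnn1]
    apply ENNReal.ofReal_le_ofReal
    have hmin := lem_min_le_two (x := l * r) (by positivity)
    rw [min_eq_right hlr1] at hmin
    have h3 : (0:ℝ) ≤ (l^2)⁻¹ := by positivity
    have h4 : l * r / 2 ≤ 1 - Real.exp (-l * r) := by rw [neg_mul]; linarith
    calc (r/2) * l⁻¹ = (l * r / 2) * (l^2)⁻¹ := by field_simp
      _ ≤ (1 - Real.exp (-l * r)) * (l^2)⁻¹ := mul_le_mul_of_nonneg_right h4 h3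
  refine le_trans (le_of_eq ?_) key
  rw [lem_lint_Ioc_inv hθ hBθ.le (by positivity : (0:ℝ) ≤ r/2), one_div]

end KSec

section GreySec
open MeasureTheory Set Filter Topology Real
open scoped ENNReal NNReal

lemma lem_grey_equiv (Ψ : ℝ → ℝ) (a b : ℝ) (piM : Measure ℝ)
    (hbm : IsBranchingMechanism Ψ a b piM) (hnl : IsNonLinear b piM)
    (hfv : FiniteVariationType b piM)
    (c : ℝ) (hc : 0 ≤ c) (hder : Tendsto (fun l => Ψ l / l) (𝓝[>] 0) (𝓝 c))
    (θ : ℝ) (hθ : 0 < θ) :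
    IntegrableOn (fun l => Dconst a piM / Ψ l - 1 / l) (Set.Ioi θ) volume ↔
      (∫⁻ r in Set.Ioo (0:ℝ) 1, ENNReal.ofReal (r * Real.log (1 / r)) ∂piM) < ⊤ := by
  have hπc := hbm.2.1
  have hsq := hbm.2.2.1
  have hfvl := hfv.2
  have hDpos : 0 < Dconst a piM := lem_D_pos hbm hnl hfv hc hder
  set D := Dconst a piM with hD
  have hψpos : ∀ l : ℝ, 0 < l → 0 < Ψ l := fun l hl => lem_psi_pos hbm hnl hfv hc hder hl
  have hψub : ∀ l : ℝ, 0 ≤ l → Ψ l ≤ D * l := fun l hl => lem_psi_ub hbm hfv hl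
  have hψeq : ∀ l : ℝ, 0 ≤ l → Ψ l = D * l - PhiR piM l :=
    fun l hl => lem_psi_eq hbm hfv.1 hfvl hl
  have hmpos : 0 < Ψ θ / θ := div_pos (hψpos θ hθ) hθ
  set m := Ψ θ / θ with hm
  have hml : ∀ l : ℝ, θ ≤ l → m * l ≤ Ψ l := by
    intro l hl
    have hslope := lem_psi_slope hbm hfv hθ hl
    rw [hm, div_mul_eq_mul_div, div_le_iff₀ hθ]
    exact hslope
  have hψcont := lem_psi_contOn hbm hfv
  have hψne : ∀ l ∈ Set.Ioi (0:ℝ), Ψ l ≠ 0 := fun l hl => (hψpos l hl).ne'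
  have hhcont : ContinuousOn (fun l => D / Ψ l - 1 / l) (Set.Ioi (0:ℝ)) :=
    (continuousOn_const.div hψcont hψne).sub
      (continuousOn_const.div continuousOn_id (fun l hl => ne_of_gt hl))
  have hIoisub : Set.Ioi θ ⊆ Set.Ioi (0:ℝ) := fun x hx => lt_trans hθ hx
  have hhnn : ∀ l ∈ Set.Ioi θ, 0 ≤ D / Ψ l - 1 / l := by
    intro l hl
    have hlp : 0 < l := lt_trans hθ hl
    have hψp := hψpos l hlp
    have hub := hψub l hlp.le
    have hdd : 1 / l ≤ D / Ψ l := by rw [div_le_div_iff₀ hlp hψp]; nlinarith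
    linarith
  have hhnnae : 0 ≤ᵐ[volume.restrict (Set.Ioi θ)] fun l => D / Ψ l - 1 / l := by
    filter_upwards [ae_restrict_mem measurableSet_Ioi] with l hl
    exact hhnn l hl
  have hhmeas : AEStronglyMeasurable (fun l => D / Ψ l - 1 / l) (volume.restrict (Set.Ioi θ)) :=
    (hhcont.mono hIoisub).aestronglyMeasurable measurableSet_Ioi
  have step1 : IntegrableOn (fun l => D / Ψ l - 1 / l) (Set.Ioi θ) volume ↔
      (∫⁻ l in Set.Ioi θ, ENNReal.ofReal (D / Ψ l - 1 / l)) < ⊤ := by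
    constructor
    · intro hInt
      rw [← MeasureTheory.ofReal_integral_eq_lintegral_ofReal hInt hhnnae]
      exact ENNReal.ofReal_lt_top
    · intro hfin
      refine ⟨hhmeas, ?_⟩
      rw [hasFiniteIntegral_iff_ofReal hhnnae]
      exact hfin
  set N := ∫⁻ l in Set.Ioi θ, ENNReal.ofReal (PhiR piM l / l ^ 2) with hN
  have hbound : ∀ l ∈ Set.Ioi θ,
      PhiR piM l / l ^ 2 ≤ D * (D / Ψ l - 1 / l) ∧
      m * (D / Ψ l - 1 / l) ≤ PhiR piM l / l ^ 2 := by
    intro l hl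
    have hlp : 0 < l := lt_trans hθ hl
    have hψp := hψpos l hlp
    have hΦeq : PhiR piM l = D * l - Ψ l := by rw [hψeq l hlp.le]; ring
    have hΦnn : 0 ≤ PhiR piM l := lem_PhiR_nonneg hπc hlp.le
    have hub := hψub l hlp.le
    have hmll := hml l (le_of_lt hl)
    have hid : D / Ψ l - 1 / l = PhiR piM l / (l * Ψ l) := by
      rw [hΦeq, div_sub_div _ _ hψp.ne' hlp.ne']
      ring_nf
    have hl2 : (0:ℝ) < l ^ 2 := by positivity
    have hlψ : (0:ℝ) < l * Ψ l := by positivity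
    constructor
    · rw [hid, ← mul_div_assoc, div_le_div_iff₀ hl2 hlψ]
      nlinarith [mul_nonneg (mul_nonneg hΦnn hlp.le) (sub_nonneg.mpr hub)]
    · rw [hid, ← mul_div_assoc, div_le_div_iff₀ hlψ hl2]
      nlinarith [mul_nonneg (mul_nonneg hΦnn hlp.le) (sub_nonneg.mpr hmll)]
  have step2 : (∫⁻ l in Set.Ioi θ, ENNReal.ofReal (D / Ψ l - 1 / l)) < ⊤ ↔ N < ⊤ := by
    constructor
    · intro hfin
      have hle : N ≤ ENNReal.ofReal D * ∫⁻ l in Set.Ioi θ, ENNReal.ofReal (D / Ψ l - 1 / l) := by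
        rw [← lintegral_const_mul' _ _ ENNReal.ofReal_ne_top]
        apply lintegral_mono_ae
        filter_upwards [ae_restrict_mem measurableSet_Ioi] with l hl
        rw [← ENNReal.ofReal_mul hDpos.le]
        exact ENNReal.ofReal_le_ofReal (hbound l hl).1
      exact lt_of_le_of_lt hle (ENNReal.mul_lt_top ENNReal.ofReal_lt_top hfin)
    · intro hfin
      have hle : ENNReal.ofReal m * (∫⁻ l in Set.Ioi θ, ENNReal.ofReal (D / Ψ l - 1 / l)) ≤ N := by
        rw [← lintegral_const_mul' _ _ ENNReal.ofReal_ne_top]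
        apply lintegral_mono_ae
        filter_upwards [ae_restrict_mem measurableSet_Ioi] with l hl
        rw [← ENNReal.ofReal_mul hmpos.le]
        exact ENNReal.ofReal_le_ofReal (hbound l hl).2
      by_contra hcon
      push_neg at hcon
      rw [top_le_iff.mp hcon, ENNReal.mul_top (ENNReal.ofReal_pos.mpr hmpos).ne'] at hle
      exact hfin.ne (top_le_iff.mp hle)
  haveI : SigmaFinite piM := lem_sigmaFinite hπc hsq hfvl
  have huncmeas : Measurable (fun p : ℝ × ℝ =>
      ENNReal.ofReal (1 - Real.exp (-p.1 * p.2)) * ENNReal.ofReal ((p.1 ^ 2)⁻¹)) := by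
    refine Measurable.mul (f := fun p : ℝ × ℝ => ENNReal.ofReal (1 - Real.exp (-p.1 * p.2)))
      (g := fun p : ℝ × ℝ => ENNReal.ofReal ((p.1 ^ 2)⁻¹)) ?_ ?_
    · exact (Continuous.measurable (by fun_prop)).ennreal_ofReal
    · exact ((continuous_fst.pow 2).measurable.inv).ennreal_ofReal
  set K : ℝ → ℝ≥0∞ := fun r =>
    ∫⁻ l in Set.Ioi θ, ENNReal.ofReal (1 - Real.exp (-l * r)) * ENNReal.ofReal ((l ^ 2)⁻¹) with hK
  have hKmeas : Measurable K := Measurable.lintegral_prod_left' huncmeas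
  have hNK : N = ∫⁻ r, K r ∂piM := by
    have e1 : ∀ l ∈ Set.Ioi θ, ENNReal.ofReal (PhiR piM l / l ^ 2)
        = ∫⁻ r, ENNReal.ofReal (1 - Real.exp (-l * r)) * ENNReal.ofReal ((l ^ 2)⁻¹) ∂piM := by
      intro l hl
      have hlp : 0 < l := lt_trans hθ hl
      rw [div_eq_mul_inv, ENNReal.ofReal_mul (lem_PhiR_nonneg hπc hlp.le),
        lem_PhiR_ofReal hπc hsq hfvl hlp.le,
        ← lintegral_mul_const' _ _ ENNReal.ofReal_ne_top]
    calc N = ∫⁻ l in Set.Ioi θ, ∫⁻ r, ENNReal.ofReal (1 - Real.exp (-l * r))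
          * ENNReal.ofReal ((l ^ 2)⁻¹) ∂piM :=
        setLIntegral_congr_fun measurableSet_Ioi e1
      _ = ∫⁻ r, K r ∂piM := lintegral_lintegral_swap huncmeas.aemeasurable
  set ρ := min 1 (2 * θ)⁻¹ with hρ
  have hρpos : 0 < ρ := lt_min one_pos (by positivity)
  have hρ1 : ρ ≤ 1 := min_le_left _ _
  have hBgt : ∀ r ∈ Set.Ioo (0:ℝ) ρ, θ < r⁻¹ ∧ Real.log θ + Real.log 2 ≤ Real.log (1 / r) := by
    intro r hr
    have h2θ : r < (2 * θ)⁻¹ := lt_of_lt_of_le hr.2 (min_le_right _ _)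
    have hinv : 2 * θ < r⁻¹ := by
      have hi := inv_strictAnti₀ hr.1 h2θ
      rwa [inv_inv] at hi
    refine ⟨by nlinarith, ?_⟩
    rw [one_div]
    calc Real.log θ + Real.log 2 = Real.log (2 * θ) := by
          rw [Real.log_mul two_ne_zero hθ.ne']; ring
      _ ≤ Real.log r⁻¹ := Real.log_le_log (by positivity) hinv.le
  have hlog1r : ∀ r ∈ Set.Ioo (0:ℝ) ρ, 0 ≤ Real.log (1 / r) := by
    intro r hr
    apply Real.log_nonneg
    rw [le_div_iff₀ hr.1]
    nlinarith [hr.2, hρ1]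
  have hKup : ∀ r ∈ Set.Ioo (0:ℝ) ρ,
      K r ≤ ENNReal.ofReal (r * Real.log (1 / r))
        + ENNReal.ofReal r * ENNReal.ofReal (1 + |Real.log θ|) := by
    intro r hr
    refine le_trans (lem_K_upper hθ hr.1 (hBgt r hr).1) ?_
    calc ENNReal.ofReal (r * (Real.log (1 / r) - Real.log θ)) + ENNReal.ofReal r
        ≤ ENNReal.ofReal (r * Real.log (1 / r) + r * |Real.log θ|) + ENNReal.ofReal r := by
          apply add_le_add_left
          apply ENNReal.ofReal_le_ofReal
          nlinarith [mul_nonneg hr.1.le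
            (by linarith [neg_abs_le (Real.log θ)] : (0:ℝ) ≤ |Real.log θ| + Real.log θ)]
      _ ≤ (ENNReal.ofReal (r * Real.log (1 / r)) + ENNReal.ofReal (r * |Real.log θ|))
          + ENNReal.ofReal r := add_le_add_left ENNReal.ofReal_add_le _
      _ = ENNReal.ofReal (r * Real.log (1 / r))
          + (ENNReal.ofReal (r * |Real.log θ|) + ENNReal.ofReal r) := add_assoc _ _ _
      _ = ENNReal.ofReal (r * Real.log (1 / r)) + ENNReal.ofReal (r * |Real.log θ| + r) := by
          rw [ENNReal.ofReal_add (mul_nonneg hr.1.le (abs_nonneg _)) hr.1.le]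
      _ = ENNReal.ofReal (r * Real.log (1 / r)) + ENNReal.ofReal (r * (1 + |Real.log θ|)) := by
          ring_nf
      _ = ENNReal.ofReal (r * Real.log (1 / r))
          + ENNReal.ofReal r * ENNReal.ofReal (1 + |Real.log θ|) := by
          rw [← ENNReal.ofReal_mul hr.1.le]
  have hKlow : ∀ r ∈ Set.Ioo (0:ℝ) ρ,
      ENNReal.ofReal (r * Real.log (1 / r))
        ≤ 2 * K r + ENNReal.ofReal r * ENNReal.ofReal |Real.log θ| := by
    intro r hr
    have h1 := lem_K_lower hθ hr.1 (hBgt r hr).1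
    have hreal : r * Real.log (1 / r)
        ≤ 2 * ((r / 2) * (Real.log (1 / r) - Real.log θ)) + r * |Real.log θ| := by
      nlinarith [mul_nonneg hr.1.le
        (sub_nonneg.mpr (le_abs_self (Real.log θ)))]
    calc ENNReal.ofReal (r * Real.log (1 / r))
        ≤ ENNReal.ofReal (2 * ((r / 2) * (Real.log (1 / r) - Real.log θ)) + r * |Real.log θ|) :=
          ENNReal.ofReal_le_ofReal hreal
      _ ≤ ENNReal.ofReal (2 * ((r / 2) * (Real.log (1 / r) - Real.log θ)))
          + ENNReal.ofReal (r * |Real.log θ|) := ENNReal.ofReal_add_le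
      _ = ENNReal.ofReal 2 * ENNReal.ofReal ((r / 2) * (Real.log (1 / r) - Real.log θ))
          + ENNReal.ofReal r * ENNReal.ofReal |Real.log θ| := by
          rw [ENNReal.ofReal_mul (by norm_num : (0:ℝ) ≤ 2), ENNReal.ofReal_mul hr.1.le]
      _ ≤ ENNReal.ofReal 2 * K r + ENNReal.ofReal r * ENNReal.ofReal |Real.log θ| :=
          add_le_add_left (mul_le_mul_right h1 _) _
      _ = 2 * K r + ENNReal.ofReal r * ENNReal.ofReal |Real.log θ| := by
          norm_num
  have hπρ : piM (Set.Ici ρ) < ⊤ := by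
    calc piM (Set.Ici ρ)
        ≤ piM (Set.Ioi (ρ / 2)) := measure_mono (fun x hx => lt_of_lt_of_le (by linarith : ρ / 2 < ρ) hx)
      _ < ⊤ := lem_pi_Ioi_lt_top hsq hfvl (by positivity)
  have hmeas1 : Measurable (fun r : ℝ => ENNReal.ofReal (r * Real.log (1 / r))) :=
    (measurable_id.mul (Real.measurable_log.comp (measurable_const.div measurable_id))).ennreal_ofReal
  have hIoo_sub : Set.Ioo (0:ℝ) ρ ⊆ Set.Ioo (0:ℝ) 1 := fun x hx => ⟨hx.1, lt_of_lt_of_le hx.2 hρ1⟩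
  have dirA : N < ⊤ → (∫⁻ r in Set.Ioo (0:ℝ) 1, ENNReal.ofReal (r * Real.log (1 / r)) ∂piM) < ⊤ := by
    intro hNfin
    have hdisj : Disjoint (Set.Ioo (0:ℝ) ρ) (Set.Ico ρ 1) := by
      apply Set.disjoint_left.mpr
      intro x hx hx'
      exact absurd hx.2 (not_lt.mpr hx'.1)
    rw [show Set.Ioo (0:ℝ) 1 = Set.Ioo 0 ρ ∪ Set.Ico ρ 1 from
      (Set.Ioo_union_Ico_eq_Ioo hρpos hρ1).symm,
      lintegral_union measurableSet_Ico hdisj]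
    apply ENNReal.add_lt_top.mpr
    constructor
    · calc ∫⁻ r in Set.Ioo (0:ℝ) ρ, ENNReal.ofReal (r * Real.log (1 / r)) ∂piM
          ≤ ∫⁻ r in Set.Ioo (0:ℝ) ρ,
              (2 * K r + ENNReal.ofReal r * ENNReal.ofReal |Real.log θ|) ∂piM := by
            apply lintegral_mono_ae
            filter_upwards [ae_restrict_mem measurableSet_Ioo] with r hr
            exact hKlow r hr
        _ = 2 * (∫⁻ r in Set.Ioo (0:ℝ) ρ, K r ∂piM)
            + (∫⁻ r in Set.Ioo (0:ℝ) ρ, ENNReal.ofReal r ∂piM) * ENNReal.ofReal |Real.log θ| := by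
            rw [lintegral_add_left (hKmeas.const_mul 2),
              lintegral_const_mul' _ _ (by simp : (2:ℝ≥0∞) ≠ ⊤),
              lintegral_mul_const' _ _ ENNReal.ofReal_ne_top]
        _ < ⊤ := by
            apply ENNReal.add_lt_top.mpr
            constructor
            · apply ENNReal.mul_lt_top (by simp)
              calc (∫⁻ r in Set.Ioo (0:ℝ) ρ, K r ∂piM) ≤ ∫⁻ r, K r ∂piM :=
                  setLIntegral_le_lintegral _ _
                _ = N := hNK.symm
                _ < ⊤ := hNfin
            · apply ENNReal.mul_lt_top ?_ ENNReal.ofReal_lt_top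
              calc (∫⁻ r in Set.Ioo (0:ℝ) ρ, ENNReal.ofReal r ∂piM)
                  ≤ ∫⁻ r in Set.Ioo (0:ℝ) 1, ENNReal.ofReal r ∂piM := lintegral_mono_set hIoo_sub
                _ < ⊤ := hfvl
    · calc ∫⁻ r in Set.Ico ρ 1, ENNReal.ofReal (r * Real.log (1 / r)) ∂piM
          ≤ ∫⁻ _ in Set.Ico ρ 1, ENNReal.ofReal (Real.log (1 / ρ)) ∂piM := by
            apply setLIntegral_mono measurable_const
            intro r hr
            apply ENNReal.ofReal_le_ofReal
            have hr0 : 0 < r := lt_of_lt_of_le hρpos hr.1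
            have hlog : Real.log (1 / r) ≤ Real.log (1 / ρ) := by
              rw [one_div, one_div]
              exact Real.log_le_log (by positivity) (inv_anti₀ hρpos hr.1)
            have hlognn : 0 ≤ Real.log (1 / r) := by
              apply Real.log_nonneg
              rw [le_div_iff₀ hr0]
              nlinarith [hr.2]
            nlinarith [hr.2]
        _ = ENNReal.ofReal (Real.log (1 / ρ)) * piM (Set.Ico ρ 1) := setLIntegral_const _ _
        _ < ⊤ := ENNReal.mul_lt_top ENNReal.ofReal_lt_top
            (lt_of_le_of_lt (measure_mono Set.Ico_subset_Ici_self) hπρ)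
  have dirB : (∫⁻ r in Set.Ioo (0:ℝ) 1, ENNReal.ofReal (r * Real.log (1 / r)) ∂piM) < ⊤ →
      N < ⊤ := by
    intro hG
    rw [hNK, ← lintegral_add_compl K measurableSet_Ioi]
    apply ENNReal.add_lt_top.mpr
    constructor
    · have hdisj2 : Disjoint (Set.Ioo (0:ℝ) ρ) (Set.Ici ρ) := by
        apply Set.disjoint_left.mpr
        intro x hx hx'
        exact absurd hx.2 (not_lt.mpr hx')
      rw [show Set.Ioi (0:ℝ) = Set.Ioo 0 ρ ∪ Set.Ici ρ from
        (Set.Ioo_union_Ici_eq_Ioi hρpos).symm,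
        lintegral_union measurableSet_Ici hdisj2]
      apply ENNReal.add_lt_top.mpr
      constructor
      · calc ∫⁻ r in Set.Ioo (0:ℝ) ρ, K r ∂piM
            ≤ ∫⁻ r in Set.Ioo (0:ℝ) ρ,
                (ENNReal.ofReal (r * Real.log (1 / r))
                  + ENNReal.ofReal r * ENNReal.ofReal (1 + |Real.log θ|)) ∂piM := by
              apply lintegral_mono_ae
              filter_upwards [ae_restrict_mem measurableSet_Ioo] with r hr
              exact hKup r hr
          _ = (∫⁻ r in Set.Ioo (0:ℝ) ρ, ENNReal.ofReal (r * Real.log (1 / r)) ∂piM)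
              + (∫⁻ r in Set.Ioo (0:ℝ) ρ, ENNReal.ofReal r ∂piM)
                * ENNReal.ofReal (1 + |Real.log θ|) := by
              rw [lintegral_add_left hmeas1, lintegral_mul_const' _ _ ENNReal.ofReal_ne_top]
          _ < ⊤ := by
              apply ENNReal.add_lt_top.mpr
              constructor
              · exact lt_of_le_of_lt (lintegral_mono_set hIoo_sub) hG
              · apply ENNReal.mul_lt_top ?_ ENNReal.ofReal_lt_top
                exact lt_of_le_of_lt (lintegral_mono_set hIoo_sub) hfvl
      · calc ∫⁻ r in Set.Ici ρ, K r ∂piM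
            ≤ ∫⁻ _ in Set.Ici ρ, (∫⁻ l in Set.Ioi θ, ENNReal.ofReal ((l ^ 2)⁻¹)) ∂piM :=
              lintegral_mono (fun r => lem_K_const hθ r)
          _ = (∫⁻ l in Set.Ioi θ, ENNReal.ofReal ((l ^ 2)⁻¹)) * piM (Set.Ici ρ) :=
              setLIntegral_const _ _
          _ < ⊤ := ENNReal.mul_lt_top (lem_Kc_lt_top hθ) hπρ
    · rw [setLIntegral_measure_zero _ _ hπc]
      simp
  rw [step1, step2]
  exact ⟨dirA, dirB⟩

end GreySec

section MainSec
open MeasureTheory Set Filter Topology Real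
open scoped ENNReal NNReal

/-- let `Ψ` be a non-linear branching mechanism of finite variation type
with `Ψ′(0+) = c ∈ [0,∞)`. Fix `θ > 0` and let `g_θ : [0,∞) → (0,∞)` satisfy
`∫_{θ}^{g_θ(t)} dλ/Ψ(λ) = t`. Then `d_θ := lim_{t→∞} e^{−Dt} g_θ(t)` exists in `[0,∞)`;
`d_θ > 0` iff `∫_{(0,1)} r·log(1/r) π(dr) < ∞`, and in that case
`log d_θ = log θ − ∫_{θ}^{∞} (D/Ψ(λ) − 1/λ) dλ`. -/
theorem csbp_grey_drift_existence_and_formula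
    (Ψ : ℝ → ℝ) (a b : ℝ) (piM : Measure ℝ)
    (hbm : IsBranchingMechanism Ψ a b piM) (hnl : IsNonLinear b piM)
    (hfv : FiniteVariationType b piM)
    (c : ℝ) (hc : 0 ≤ c) (hder : Tendsto (fun l => Ψ l / l) (𝓝[>] 0) (𝓝 c))
    (θ : ℝ) (hθ : 0 < θ)
    (g : ℝ → ℝ) (hg : ∀ t : ℝ, 0 ≤ t → 0 < g t)
    (hgeq : ∀ t : ℝ, 0 ≤ t → (∫ l in θ..(g t), (Ψ l)⁻¹) = t) :
    ∃ dθ : ℝ, 0 ≤ dθ ∧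
      Tendsto (fun t => Real.exp (-(Dconst a piM) * t) * g t) atTop (𝓝 dθ) ∧
      (0 < dθ ↔
        (∫⁻ r in Set.Ioo (0:ℝ) 1, ENNReal.ofReal (r * Real.log (1 / r)) ∂piM) < ⊤) ∧
      ((∫⁻ r in Set.Ioo (0:ℝ) 1, ENNReal.ofReal (r * Real.log (1 / r)) ∂piM) < ⊤ →
        Real.log dθ =
          Real.log θ - ∫ l in Set.Ioi θ, (Dconst a piM / Ψ l - 1 / l)) := by
  have hDpos : 0 < Dconst a piM := lem_D_pos hbm hnl hfv hc hder
  set D := Dconst a piM with hD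
  have hψpos : ∀ l : ℝ, 0 < l → 0 < Ψ l := fun l hl => lem_psi_pos hbm hnl hfv hc hder hl
  have hψub : ∀ l : ℝ, 0 ≤ l → Ψ l ≤ D * l := fun l hl => lem_psi_ub hbm hfv hl
  have hψcont : ContinuousOn Ψ (Set.Ioi (0:ℝ)) := lem_psi_contOn hbm hfv
  have hψne : ∀ l ∈ Set.Ioi (0:ℝ), Ψ l ≠ 0 := fun l hl => (hψpos l hl).ne'
  set h : ℝ → ℝ := fun l => D / Ψ l - 1 / l with hh
  have hhcont : ContinuousOn h (Set.Ioi (0:ℝ)) :=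
    (continuousOn_const.div hψcont hψne).sub
      (continuousOn_const.div continuousOn_id (fun l hl => ne_of_gt hl))
  have hinvcont : ContinuousOn (fun l => (Ψ l)⁻¹) (Set.Ioi (0:ℝ)) := hψcont.inv₀ hψne
  have hsub : ∀ u v : ℝ, θ ≤ u → θ ≤ v → Set.uIcc u v ⊆ Set.Ioi (0:ℝ) := by
    intro u v hu hv x hx
    rw [Set.mem_uIcc] at hx
    rcases hx with ⟨h1, _⟩ | ⟨h1, _⟩
    · exact lt_of_lt_of_le hθ (le_trans hu h1)
    · exact lt_of_lt_of_le hθ (le_trans hv h1)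
  have hinvII : ∀ u v : ℝ, θ ≤ u → θ ≤ v → IntervalIntegrable (fun l => (Ψ l)⁻¹) volume u v :=
    fun u v hu hv => (hinvcont.mono (hsub u v hu hv)).intervalIntegrable
  have hhII : ∀ u v : ℝ, θ ≤ u → θ ≤ v → IntervalIntegrable h volume u v :=
    fun u v hu hv => (hhcont.mono (hsub u v hu hv)).intervalIntegrable
  set F : ℝ → ℝ := fun x => ∫ l in θ..x, (Ψ l)⁻¹ with hF
  have hFg : ∀ t : ℝ, 0 ≤ t → F (g t) = t := hgeq
  have hinv_nonneg : ∀ l : ℝ, 0 < l → 0 ≤ (Ψ l)⁻¹ := fun l hl => inv_nonneg.mpr (hψpos l hl).le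
  have hgθ : ∀ t : ℝ, 0 < t → θ < g t := by
    intro t ht
    by_contra hcon
    push_neg at hcon
    have h1 : (0:ℝ) ≤ ∫ l in (g t)..θ, (Ψ l)⁻¹ :=
      intervalIntegral.integral_nonneg hcon
        (fun u hu => hinv_nonneg u (lt_of_lt_of_le (hg t ht.le) hu.1))
    have h2 : F (g t) = - ∫ l in (g t)..θ, (Ψ l)⁻¹ := intervalIntegral.integral_symm (g t) θ
    have h3 := hFg t ht.le
    rw [h2] at h3
    linarith
  have hFmono : ∀ x y : ℝ, θ ≤ x → x ≤ y → F x ≤ F y := by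
    intro x y hx hxy
    have hadd : F x + (∫ l in x..y, (Ψ l)⁻¹) = F y :=
      intervalIntegral.integral_add_adjacent_intervals (hinvII θ x le_rfl hx)
        (hinvII x y hx (le_trans hx hxy))
    have hnn : (0:ℝ) ≤ ∫ l in x..y, (Ψ l)⁻¹ :=
      intervalIntegral.integral_nonneg hxy
        (fun u hu => hinv_nonneg u (lt_of_lt_of_le hθ (le_trans hx hu.1)))
    linarith
  have hgtend : Tendsto g atTop atTop := by
    rw [tendsto_atTop]
    intro M
    filter_upwards [eventually_gt_atTop (max (F (max M θ)) 0),
      eventually_gt_atTop 0] with t ht ht0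
    by_contra hcon
    push_neg at hcon
    have h1 : g t ≤ max M θ := le_trans hcon.le (le_max_left _ _)
    have h2 : t = F (g t) := (hFg t ht0.le).symm
    have h3 : F (g t) ≤ F (max M θ) := hFmono _ _ (hgθ t ht0).le h1
    have h4 : F (max M θ) < t := lt_of_le_of_lt (le_max_left _ _) ht
    linarith
  set Herr : ℝ → ℝ := fun x => ∫ l in θ..x, h l with hHerrDef
  have hHid : ∀ x : ℝ, θ ≤ x → Herr x = D * F x - (Real.log x - Real.log θ) := by
    intro x hx
    have hxpos : 0 < x := lt_of_lt_of_le hθ hx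
    have hIIinv : IntervalIntegrable (fun l => D * (Ψ l)⁻¹) volume θ x :=
      (hinvII θ x le_rfl hx).const_mul D
    have hIIone : IntervalIntegrable (fun l : ℝ => l⁻¹) volume θ x :=
      ((continuousOn_inv₀.mono (fun u hu => ne_of_gt (Set.mem_Ioi.mp
        (hsub θ x le_rfl hx hu)))).intervalIntegrable)
    have e1 : Herr x = (∫ l in θ..x, D * (Ψ l)⁻¹) - ∫ l in θ..x, l⁻¹ := by
      rw [← intervalIntegral.integral_sub hIIinv hIIone]
      apply intervalIntegral.integral_congr
      intro l hl
      simp only [hh, div_eq_mul_inv, one_mul]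
    have e2 : (∫ l in θ..x, D * (Ψ l)⁻¹) = D * F x := intervalIntegral.integral_const_mul D _
    have e3 : (∫ l in θ..x, l⁻¹) = Real.log x - Real.log θ := by
      rw [integral_inv (notMem_uIcc_of_lt hθ hxpos)]
      exact Real.log_div hxpos.ne' hθ.ne'
    rw [e1, e2, e3]
  have hident : ∀ t : ℝ, 0 < t → Real.exp (-D * t) * g t = θ * Real.exp (-(Herr (g t))) := by
    intro t ht
    have hgt := hgθ t ht
    have hgpos : 0 < g t := lt_trans hθ hgt
    have h1 : Real.exp (-D * t) * g t = Real.exp (-D * t + Real.log (g t)) := by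
      rw [Real.exp_add, Real.exp_log hgpos]
    have h2 : -D * t + Real.log (g t) = Real.log θ + -(Herr (g t)) := by
      have e := hHid (g t) hgt.le
      rw [hFg t ht.le] at e
      rw [e]; ring
    rw [h1, h2, Real.exp_add, Real.exp_log hθ]
  by_cases hint : IntegrableOn h (Set.Ioi θ) volume
  · refine ⟨θ * Real.exp (-(∫ l in Set.Ioi θ, h l)), by positivity, ?_, ?_, ?_⟩
    · have hHtend : Tendsto (fun t => Herr (g t)) atTop (𝓝 (∫ l in Set.Ioi θ, h l)) :=
        intervalIntegral_tendsto_integral_Ioi θ hint hgtend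
      have hmain : Tendsto (fun t => θ * Real.exp (-(Herr (g t)))) atTop
          (𝓝 (θ * Real.exp (-(∫ l in Set.Ioi θ, h l)))) :=
        ((Real.continuous_exp.tendsto _).comp hHtend.neg).const_mul θ
      refine Tendsto.congr' ?_ hmain
      filter_upwards [eventually_gt_atTop 0] with t ht
      exact (hident t ht).symm
    · constructor
      · intro _
        exact (lem_grey_equiv Ψ a b piM hbm hnl hfv c hc hder θ hθ).mp hint
      · intro _; positivity
    · intro _
      rw [Real.log_mul hθ.ne' (Real.exp_ne_zero _), Real.log_exp]
      ring
  · have hgrey : ¬ ((∫⁻ r in Set.Ioo (0:ℝ) 1, ENNReal.ofReal (r * Real.log (1 / r)) ∂piM) < ⊤) :=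
      fun hG => hint ((lem_grey_equiv Ψ a b piM hbm hnl hfv c hc hder θ hθ).mpr hG)
    refine ⟨0, le_rfl, ?_, ?_, ?_⟩
    · have hhnn : ∀ l : ℝ, θ ≤ l → 0 ≤ h l := by
        intro l hl
        have hlp : 0 < l := lt_of_lt_of_le hθ hl
        have hub := hψub l hlp.le
        have hψp := hψpos l hlp
        have hmain : 1 / l ≤ D / Ψ l := by
          rw [div_le_div_iff₀ hlp hψp]; nlinarith
        simp only [hh]; linarith
      have hHmono : ∀ x y : ℝ, θ ≤ x → x ≤ y → Herr x ≤ Herr y := by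
        intro x y hx hxy
        have hadd : Herr x + (∫ l in x..y, h l) = Herr y :=
          intervalIntegral.integral_add_adjacent_intervals (hhII θ x le_rfl hx)
            (hhII x y hx (le_trans hx hxy))
        have hnn : (0:ℝ) ≤ ∫ l in x..y, h l :=
          intervalIntegral.integral_nonneg hxy (fun u hu => hhnn u (le_trans hx hu.1))
        linarith
      have hHIoc : ∀ x : ℝ, IntegrableOn h (Set.Ioc θ x) volume := by
        intro x
        rcases le_or_gt x θ with hx | hx
        · rw [Set.Ioc_eq_empty (not_lt.mpr hx)]
          exact integrableOn_empty
        · exact ((hhcont.mono (fun u hu => lt_of_lt_of_le hθ hu.1)).integrableOn_compact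
            isCompact_Icc).mono_set Set.Ioc_subset_Icc_self
      have hunb : ∀ C : ℝ, ∃ x, θ ≤ x ∧ C ≤ Herr x := by
        intro C
        by_contra hcon
        push_neg at hcon
        apply hint
        apply integrableOn_Ioi_of_intervalIntegral_norm_bounded C θ hHIoc
          (tendsto_id : Tendsto (id : ℝ → ℝ) atTop atTop)
        filter_upwards [eventually_ge_atTop θ] with x hx
        have e : (∫ l in θ..x, ‖h l‖) = Herr x := by
          apply intervalIntegral.integral_congr
          intro l hl
          rw [Set.uIcc_of_le hx] at hl
          exact Real.norm_of_nonneg (hhnn l hl.1)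
        rw [e]
        exact (hcon x hx).le
      have hHtop : Tendsto (fun t => Herr (g t)) atTop atTop := by
        rw [tendsto_atTop]
        intro C
        obtain ⟨x, hx, hCx⟩ := hunb C
        filter_upwards [hgtend.eventually (eventually_ge_atTop x),
          eventually_gt_atTop 0] with t h1 _
        exact le_trans hCx (hHmono x (g t) hx h1)
      have hmain : Tendsto (fun t => θ * Real.exp (-(Herr (g t)))) atTop (𝓝 0) := by
        have hb : Tendsto (fun t => -(Herr (g t))) atTop atBot :=
          tendsto_neg_atTop_atBot.comp hHtop
        have he := Real.tendsto_exp_atBot.comp hb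
        simpa using he.const_mul θ
      refine Tendsto.congr' ?_ hmain
      filter_upwards [eventually_gt_atTop 0] with t ht
      exact (hident t ht).symm
    · simp only [lt_self_iff_false, false_iff]
      exact hgrey
    · intro hG
      exact absurd hG hgrey

end MainSec
end IntComp
end

section
/- Let Ψ be a non-linear branching mechanism of finite variation type with Ψ′(0+) := lim_{λ→0+} Ψ(λ)/λ ∈ (−∞,0) and with Ψ(λ) ≤ 0 for every λ ≥ 0 (i.e. γ = sup{λ : Ψ(λ) ≤ 0} = ∞). Let u be a flow for Ψ. Then for every θ > 0, lim_{t→∞} e^{Ψ′(0+)·t} u(t,θ) = 0. -/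
open MeasureTheory Set Filter Topology
open scoped ENNReal NNReal

/-- The integrand in the Lévy–Khintchine form. -/
private noncomputable def Fbm (l r : ℝ) : ℝ :=
  Real.exp (-l * r) - 1 + (if r < 1 then l * r else 0)

/-- The chord slope `t ↦ (e^{−tr} − 1)/t` of the strictly convex function `t ↦ e^{−tr}`
is strictly increasing on `(0,∞)` when `r ≠ 0`. -/
private lemma slope_strictMono (r : ℝ) (hr : r ≠ 0) :
    StrictMonoOn (fun t : ℝ => (Real.exp (-t*r) - 1)/t) (Set.Ioi 0) := by
  have hderiv : ∀ t : ℝ, 0 < t → HasDerivAt (fun t : ℝ => (Real.exp (-t*r) - 1)/t)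
      (((-r * Real.exp (-t*r)) * t - (Real.exp (-t*r) - 1) * 1)/t^2) t := by
    intro t ht
    have h0 : HasDerivAt (fun t : ℝ => -t*r) (-r) t := by
      simpa using ((hasDerivAt_id t).neg.mul_const r)
    have h1 : HasDerivAt (fun t : ℝ => Real.exp (-t*r) - 1) (-r * Real.exp (-t*r)) t := by
      simpa [mul_comm] using (h0.exp.sub_const 1)
    exact h1.div (hasDerivAt_id t) ht.ne'
  apply strictMonoOn_of_hasDerivWithinAt_pos (convex_Ioi 0)
  · intro t ht
    exact (hderiv t ht).continuousAt.continuousWithinAt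
  · intro t ht
    rw [interior_Ioi] at ht ⊢
    exact ((hderiv t ht).hasDerivWithinAt)
  · intro t ht
    rw [interior_Ioi] at ht
    have htr : t * r ≠ 0 := mul_ne_zero ht.ne' hr
    have hlt : t * r + 1 < Real.exp (t*r) := Real.add_one_lt_exp htr
    have he : 0 < Real.exp (-t*r) := Real.exp_pos _
    have hmul : Real.exp (-t*r) * Real.exp (t*r) = 1 := by
      rw [← Real.exp_add]; simp
    have hnum : 0 < (-r * Real.exp (-t*r)) * t - (Real.exp (-t*r) - 1) * 1 := by
      nlinarith [mul_lt_mul_of_pos_left hlt he]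
    exact div_pos hnum (pow_pos ht 2)

/-- Integrability of the Lévy–Khintchine integrand. -/
private lemma F_integrable {piM : Measure ℝ} (hcar : piM (Set.Ioi (0:ℝ))ᶜ = 0)
    (hint : (∫⁻ r, ENNReal.ofReal (min 1 (r ^ 2)) ∂piM) < ⊤) {l : ℝ} (hl : 0 < l) :
    Integrable (Fbm l) piM := by
  have hgmeas : Measurable (fun r : ℝ => (1 + l^2) * min 1 (r ^ 2)) := by
    measurability
  have hgint : Integrable (fun r : ℝ => (1 + l^2) * min 1 (r ^ 2)) piM := by
    refine ⟨hgmeas.aestronglyMeasurable, ?_⟩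
    rw [hasFiniteIntegral_iff_ofReal ?_]
    · calc ∫⁻ r, ENNReal.ofReal ((1 + l^2) * min 1 (r ^ 2)) ∂piM
          = ∫⁻ r, ENNReal.ofReal (1 + l^2) * ENNReal.ofReal (min 1 (r ^ 2)) ∂piM := by
            congr 1; ext r
            rw [ENNReal.ofReal_mul (by positivity)]
        _ = ENNReal.ofReal (1 + l^2) * ∫⁻ r, ENNReal.ofReal (min 1 (r ^ 2)) ∂piM := by
            rw [lintegral_const_mul _ (by measurability)]
        _ < ⊤ := ENNReal.mul_lt_top ENNReal.ofReal_lt_top hint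
    · refine Eventually.of_forall fun r => ?_
      have : (0:ℝ) ≤ min 1 (r^2) := le_min one_pos.le (sq_nonneg r)
      positivity
  have hmeas : AEStronglyMeasurable (Fbm l) piM := by
    apply Measurable.aestronglyMeasurable
    apply Measurable.add
    · exact (Real.measurable_exp.comp (measurable_const.mul measurable_id)).sub measurable_const
    · exact Measurable.ite (measurableSet_lt measurable_id measurable_const)
        (measurable_const.mul measurable_id) measurable_const
  refine hgint.mono' hmeas ?_
  have hae : ∀ᵐ r ∂piM, r ∈ Set.Ioi (0:ℝ) := by
    rw [MeasureTheory.ae_iff]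
    exact hcar
  filter_upwards [hae] with r hr
  rw [Set.mem_Ioi] at hr
  have hexp_le : Real.exp (-l * r) ≤ 1 := by
    apply Real.exp_le_one_iff.mpr
    nlinarith
  have hexp_pos : (0:ℝ) < Real.exp (-l * r) := Real.exp_pos _
  have hlow : 1 - l * r ≤ Real.exp (-l * r) := by
    have := Real.add_one_le_exp (-(l*r))
    have h2 : -l * r = -(l*r) := by ring
    linarith [h2 ▸ this]
  rcases le_or_gt 1 r with h1 | h1
  · -- r ≥ 1
    have hz : (if r < 1 then l * r else 0) = 0 := by
      rw [if_neg (not_lt.mpr h1)]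
    unfold Fbm
    rw [hz, add_zero]
    have hmin : min 1 (r^2) = 1 := min_eq_left (by nlinarith)
    rw [hmin, mul_one]
    rw [Real.norm_eq_abs, abs_le]
    constructor <;> nlinarith
  · -- 0 < r < 1
    unfold Fbm
    rw [if_pos h1]
    have hF_nonneg : 0 ≤ Real.exp (-l * r) - 1 + l * r := by
      have : -l * r = -(l*r) := by ring
      linarith
    have hmin : min 1 (r^2) = r^2 := min_eq_right (by nlinarith)
    rw [hmin, Real.norm_eq_abs, abs_of_nonneg hF_nonneg]
    have key : Real.exp (-l*r) - 1 + l*r ≤ (l*r)^2 := by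
      rcases le_or_gt (l*r) 1 with h2 | h2
      · have habs : |(-(l*r))| ≤ 1 := by
          rw [abs_neg, abs_of_nonneg (by positivity)]; exact h2
        have := Real.abs_exp_sub_one_sub_id_le habs
        have heq : -l * r = -(l*r) := by ring
        rw [heq]
        calc Real.exp (-(l*r)) - 1 + l*r = Real.exp (-(l*r)) - 1 - (-(l*r)) := by ring
          _ ≤ |Real.exp (-(l*r)) - 1 - (-(l*r))| := le_abs_self _
          _ ≤ (-(l*r))^2 := this
          _ = (l*r)^2 := by ring
      · nlinarith
    nlinarith [sq_nonneg l, sq_nonneg r, mul_pos hl hr]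

/-- Strict monotonicity of `λ ↦ Ψ(λ)/λ` on `(0,∞)` for a non-linear finite-variation
branching mechanism. -/
private lemma psi_ratio_strict {Ψ : ℝ → ℝ} {a : ℝ} {piM : Measure ℝ}
    (hcar : piM (Set.Ioi (0:ℝ))ᶜ = 0)
    (hint : (∫⁻ r, ENNReal.ofReal (min 1 (r ^ 2)) ∂piM) < ⊤)
    (hform : ∀ l, 0 ≤ l → Ψ l = psiShape a 0 piM l)
    (hpi : piM ≠ 0) {x y : ℝ} (hx : 0 < x) (hxy : x < y) :
    Ψ x / x < Ψ y / y := by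
  have hy : 0 < y := hx.trans hxy
  have hix := F_integrable hcar hint hx
  have hiy := F_integrable hcar hint hy
  have hratio : ∀ l : ℝ, 0 < l → Ψ l / l = a + ∫ r, Fbm l r / l ∂piM := by
    intro l hl
    rw [hform l hl.le]
    have : psiShape a 0 piM l = a * l + ∫ r, Fbm l r ∂piM := by
      simp [psiShape, Fbm]
    rw [this, integral_div]
    field_simp
  rw [hratio x hx, hratio y hy]
  have hiGx : Integrable (fun r => Fbm x r / x) piM := hix.div_const x
  have hiGy : Integrable (fun r => Fbm y r / y) piM := hiy.div_const y
  have hsplit : ∀ l : ℝ, 0 < l → ∀ r : ℝ,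
      Fbm l r / l = (Real.exp (-l*r) - 1)/l + (if r < 1 then r else 0) := by
    intro l hl r
    simp only [Fbm]
    rcases lt_or_ge r 1 with h | h
    · rw [if_pos h, if_pos h]; field_simp
    · rw [if_neg (not_lt.mpr h), if_neg (not_lt.mpr h)]; ring
  have hG_nonneg : ∀ r, 0 ≤ Fbm y r / y - Fbm x r / x := by
    intro r
    rw [hsplit x hx r, hsplit y hy r]
    rcases eq_or_ne r 0 with h0 | h0
    · subst h0; simp
    · have := slope_strictMono r h0 (Set.mem_Ioi.mpr hx) (Set.mem_Ioi.mpr hy) hxy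
      simp only at this
      linarith
  have hG_pos : ∀ r : ℝ, 0 < r → 0 < Fbm y r / y - Fbm x r / x := by
    intro r hr
    rw [hsplit x hx r, hsplit y hy r]
    have := slope_strictMono r hr.ne' (Set.mem_Ioi.mpr hx) (Set.mem_Ioi.mpr hy) hxy
    simp only at this
    linarith
  have hiG : Integrable (fun r => Fbm y r / y - Fbm x r / x) piM := hiGy.sub hiGx
  have hpiIoi : 0 < piM (Set.Ioi 0) := by
    rcases eq_or_ne (piM (Set.Ioi 0)) 0 with h | h
    swap
    · exact pos_iff_ne_zero.mpr h
    · exfalso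
      apply hpi
      have huniv : piM Set.univ = 0 := by
        have h1 : piM Set.univ ≤ piM (Set.Ioi 0) + piM (Set.Ioi 0)ᶜ := by
          rw [← Set.union_compl_self (Set.Ioi (0:ℝ))]
          exact measure_union_le _ _
        rw [hcar, h] at h1
        simpa using h1
      exact Measure.measure_univ_eq_zero.mp huniv
  have hsub : 0 < ∫ r, (Fbm y r / y - Fbm x r / x) ∂piM := by
    rw [integral_pos_iff_support_of_nonneg hG_nonneg hiG]
    refine lt_of_lt_of_le hpiIoi (measure_mono ?_)
    intro r hr
    exact (hG_pos r hr).ne'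
  rw [integral_sub hiGy hiGx] at hsub
  linarith

/-- let `Ψ` be a non-linear branching mechanism of finite variation type
with `Ψ′(0+) = c ∈ (−∞,0)` and `Ψ(λ) ≤ 0` for all `λ ≥ 0` (i.e. `γ = ∞`), and let `u`
be a flow for `Ψ`. Then for every `θ > 0`, `e^{Ψ′(0+)·t} u(t,θ) → 0` as `t → ∞`. -/
theorem csbp_grey_drift_vanishes_gamma_infinite
    (Ψ : ℝ → ℝ) (a b : ℝ) (piM : Measure ℝ)
    (hbm : IsBranchingMechanism Ψ a b piM) (hnl : IsNonLinear b piM)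
    (hfv : FiniteVariationType b piM)
    (c : ℝ) (hc : c < 0) (hder : Tendsto (fun l => Ψ l / l) (𝓝[>] 0) (𝓝 c))
    (hΨneg : ∀ l : ℝ, 0 ≤ l → Ψ l ≤ 0)
    (u : ℝ → ℝ → ℝ) (hu : IsFlow Ψ u) :
    ∀ θ : ℝ, 0 < θ →
      Tendsto (fun t => Real.exp (c * t) * u t θ) atTop (𝓝 0) := by
  intro θ hθ
  obtain ⟨hb0, -⟩ := hfv
  subst hb0
  obtain ⟨-, hcar, hint, hform⟩ := hbm
  have hpi : piM ≠ 0 := by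
    rcases hnl with h | h
    · exact absurd h (lt_irrefl 0)
    · exact h
  have hmono : ∀ x y : ℝ, 0 < x → x < y → Ψ x / x < Ψ y / y :=
    fun x y hx hxy => psi_ratio_strict hcar hint hform hpi hx hxy
  have hcle : ∀ l : ℝ, 0 < l → c ≤ Ψ l / l := by
    intro l hl
    refine le_of_tendsto hder ?_
    filter_upwards [Ioo_mem_nhdsGT hl] with s hs
    exact (hmono s l hs.1 hs.2).le
  have hεpos : 0 < Ψ θ / θ - c := by
    have h1 : c ≤ Ψ (θ/2) / (θ/2) := hcle _ (by positivity)
    have h2 := hmono (θ/2) θ (by positivity) (by linarith)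
    linarith
  set ε := Ψ θ / θ - c with hε
  have hfθ : Ψ θ / θ = c + ε := by rw [hε]; ring
  obtain ⟨hu0, hupos, huder⟩ := hu
  set v : ℝ → ℝ := fun t => u t θ with hv
  have hvder : ∀ t ∈ Set.Ici (0:ℝ), HasDerivWithinAt v (-(Ψ (v t))) (Set.Ici 0) t :=
    fun t ht => huder θ hθ t ht
  have hvmono : MonotoneOn v (Set.Ici 0) := by
    apply monotoneOn_of_hasDerivWithinAt_nonneg (convex_Ici 0)
      (f' := fun t => -(Ψ (v t)))
    · intro t ht; exact (hvder t ht).continuousWithinAt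
    · intro t ht
      rw [interior_Ici] at ht ⊢
      exact (hvder t (Set.mem_Ici.mpr (le_of_lt (Set.mem_Ioi.mp ht)))).mono Set.Ioi_subset_Ici_self
    · intro t ht
      rw [interior_Ici] at ht
      have := hΨneg (v t) (hupos θ hθ t (le_of_lt ht)).le
      linarith
  have hvge : ∀ t : ℝ, 0 ≤ t → θ ≤ v t := by
    intro t ht
    have h1 := hvmono Set.self_mem_Ici ht ht
    have h2 : v 0 = θ := hu0 θ hθ
    linarith
  set h : ℝ → ℝ := fun t => Real.exp ((c+ε)*t) * v t with hh
  have hhder : ∀ t ∈ Set.Ici (0:ℝ), HasDerivWithinAt h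
      (((c+ε) * Real.exp ((c+ε)*t)) * v t + Real.exp ((c+ε)*t) * (-(Ψ (v t))))
      (Set.Ici 0) t := by
    intro t ht
    have he : HasDerivAt (fun s : ℝ => Real.exp ((c+ε)*s)) ((c+ε) * Real.exp ((c+ε)*t)) t := by
      have := ((hasDerivAt_id t).const_mul (c+ε)).exp
      simpa [mul_comm] using this
    exact he.hasDerivWithinAt.mul (hvder t ht)
  have hnonpos : ∀ t : ℝ, 0 ≤ t →
      ((c+ε) * Real.exp ((c+ε)*t)) * v t + Real.exp ((c+ε)*t) * (-(Ψ (v t))) ≤ 0 := by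
    intro t ht
    have hvt : 0 < v t := hupos θ hθ t ht
    have hge : c + ε ≤ Ψ (v t) / v t := by
      rcases eq_or_lt_of_le (hvge t ht) with h1 | h1
      · rw [← h1, ← hfθ]
      · exact hfθ ▸ (hmono θ (v t) hθ h1).le
    have h2 : (c+ε) * v t ≤ Ψ (v t) := by
      rw [le_div_iff₀ hvt] at hge
      linarith
    have h3 : 0 < Real.exp ((c+ε)*t) := Real.exp_pos _
    nlinarith
  have hanti : AntitoneOn h (Set.Ici 0) := by
    apply antitoneOn_of_hasDerivWithinAt_nonpos (convex_Ici 0)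
      (f' := fun t => ((c+ε) * Real.exp ((c+ε)*t)) * v t + Real.exp ((c+ε)*t) * (-(Ψ (v t))))
    · intro t ht; exact ((hhder t ht)).continuousWithinAt
    · intro t ht
      rw [interior_Ici] at ht ⊢
      exact (hhder t (Set.mem_Ici.mpr (le_of_lt (Set.mem_Ioi.mp ht)))).mono Set.Ioi_subset_Ici_self
    · intro t ht
      rw [interior_Ici] at ht
      exact hnonpos t ht.le
  have hbound : ∀ t : ℝ, 0 ≤ t → Real.exp (c*t) * v t ≤ θ * Real.exp (-ε*t) := by
    intro t ht
    have h1 : h t ≤ h 0 := hanti Set.self_mem_Ici ht ht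
    have h0 : h 0 = θ := by simp [hh, hv, hu0 θ hθ]
    have hsplit : Real.exp (c*t) = Real.exp (-ε*t) * Real.exp ((c+ε)*t) := by
      rw [← Real.exp_add]; ring_nf
    have hepos : (0:ℝ) < Real.exp (-ε*t) := Real.exp_pos _
    calc Real.exp (c*t) * v t = Real.exp (-ε*t) * (Real.exp ((c+ε)*t) * v t) := by
          rw [hsplit]; ring
      _ ≤ Real.exp (-ε*t) * θ := by
          have hle : h t ≤ θ := h0 ▸ h1
          exact mul_le_mul_of_nonneg_left hle hepos.le
      _ = θ * Real.exp (-ε*t) := mul_comm _ _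
  have hlim : Tendsto (fun t => θ * Real.exp (-ε*t)) atTop (𝓝 0) := by
    have h1 : Tendsto (fun t : ℝ => -ε*t) atTop atBot :=
      (tendsto_const_mul_atBot_of_neg (neg_neg_iff_pos.mpr hεpos)).mpr tendsto_id
    have h2 := Real.tendsto_exp_atBot.comp h1
    have h3 := h2.const_mul θ
    simpa using h3
  apply tendsto_of_tendsto_of_tendsto_of_le_of_le' tendsto_const_nhds hlim
  · filter_upwards [eventually_ge_atTop (0:ℝ)] with t ht
    exact mul_nonneg (Real.exp_pos _).le (hupos θ hθ t ht).le
  · filter_upwards [eventually_ge_atTop (0:ℝ)] with t ht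
    exact hbound t ht
end
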